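/- arXiv:2112.14629 — 9 statements merged into one kernel-verified Lean document; each statement's English description precedes it below -/
import Mathlib

section
/- Let X be a Polish space and assume that the continuum 𝔠 is a regular cardinal. Let (Y_α)_{α<𝔠} be a family of Polish spaces and (f_α)_{α<𝔠} a family of functions f_α : X → Y_α such that for every α < 𝔠: (1) f_α is surjective onto Y_α, and (2) for every y ∈ Y_α the fiber f_α⁻¹({y}) has cardinality strictly less than 𝔠. Then there exists a set A ⊆ X such that for every α < 𝔠 the image f_α[A] is a Bernstein set in Y_α. -/
/-- A perfect set: nonempty, closed, with no isolated points. -/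
def PerfectSet {X : Type*} [TopologicalSpace X] (P : Set X) : Prop :=
  Perfect P ∧ P.Nonempty

/-- A Bernstein set in a topological space: it meets, and its complement meets,
every perfect subset of the space. -/
def IsBernstein {X : Type*} [TopologicalSpace X] (A : Set X) : Prop :=
  ∀ P : Set X, PerfectSet P → (A ∩ P).Nonempty ∧ (P \ A).Nonempty

open Cardinal Set

namespace BernsteinAux

universe u

/-- Regularity of the continuum transfers down to universe 0. -/
lemma isRegular_down (h : Cardinal.continuum.{u}.IsRegular) :
    Cardinal.continuum.{0}.IsRegular := by
  refine ⟨Cardinal.aleph0_le_continuum, ?_⟩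
  have h2 := h.2
  rw [← Cardinal.lift_continuum.{u, 0}, ← Cardinal.lift_ord, ← Ordinal.lift_cof,
    Cardinal.lift_le] at h2
  exact h2

/-- The canonical well-ordered type of cardinality continuum. -/
abbrev TT : Type := Cardinal.continuum.ord.ToType

lemma mk_TT : #TT = Cardinal.continuum :=
  Cardinal.mk_ord_toType _

lemma mk_Iio_lt (t : TT) : #{u : TT // u < t} < Cardinal.continuum :=
  Cardinal.mk_Iio_ord_toType t

/-- A nonempty perfect set in a Polish space has cardinality at least continuum. -/
lemma continuum_le_mk_perfect {Z : Type} [TopologicalSpace Z] [PolishSpace Z]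
    {P : Set Z} (hP : PerfectSet P) : Cardinal.continuum ≤ #P := by
  letI := TopologicalSpace.upgradeIsCompletelyMetrizable Z
  obtain ⟨F, hFr, -, hFi⟩ := hP.1.exists_nat_bool_injection hP.2
  have h1 : #(ℕ → Bool) ≤ #P :=
    mk_le_of_injective (f := fun b => (⟨F b, hFr ⟨b, rfl⟩⟩ : P))
      fun a b hab => hFi (congrArg Subtype.val hab)
  have h2 : #(ℕ → Bool) = Cardinal.continuum := by
    rw [mk_arrow]
    simp [Cardinal.two_power_aleph0]
  rwa [h2] at h1

/-- There are at most continuum many perfect subsets of a second countable space. -/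
lemma mk_perfectSets_le {Z : Type} [TopologicalSpace Z] [SecondCountableTopology Z] :
    #{P : Set Z // PerfectSet P} ≤ Cardinal.continuum := by
  obtain ⟨b, hbc, -, hb⟩ := TopologicalSpace.exists_countable_basis Z
  have hrepr : ∀ P : {P : Set Z // PerfectSet P}, (P.1)ᶜ = ⋃₀ {s ∈ b | s ⊆ (P.1)ᶜ} :=
    fun P => hb.open_eq_sUnion' P.2.1.closed.isOpen_compl
  have hGi : Function.Injective
      (fun P : {P : Set Z // PerfectSet P} => ({U | ↑U ⊆ (P.1)ᶜ} : Set ↥b)) := by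
    intro P Q hPQ
    have hsets : {s ∈ b | s ⊆ (P.1)ᶜ} = {s ∈ b | s ⊆ (Q.1)ᶜ} := by
      ext s
      constructor
      · rintro ⟨hsb, hsub⟩
        exact ⟨hsb, (Set.ext_iff.mp hPQ ⟨s, hsb⟩).mp hsub⟩
      · rintro ⟨hsb, hsub⟩
        exact ⟨hsb, (Set.ext_iff.mp hPQ ⟨s, hsb⟩).mpr hsub⟩
    have : (P.1)ᶜ = (Q.1)ᶜ := by rw [hrepr P, hrepr Q, hsets]
    exact Subtype.ext (compl_injective this)
  have := hbc.to_subtype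
  calc #{P : Set Z // PerfectSet P} ≤ #(Set ↥b) := mk_le_of_injective hGi
    _ = 2 ^ #↥b := mk_set
    _ ≤ 2 ^ ℵ₀ := by
        exact Cardinal.power_le_power_left (by norm_num) (Cardinal.mk_le_aleph0)
    _ = Cardinal.continuum := Cardinal.two_power_aleph0

variable {X : Type} {ι : Type} {Y : ι → Type} [∀ α, TopologicalSpace (Y α)]

/-- The property we require of the pair chosen at stage `t` of the transfinite recursion:
if `t` codes the pair `s = ⟨α, P⟩`, the chosen point maps into `P`, a "banned" point `y ∈ P`
is recorded, it is not in the image of previously chosen points, and the chosen point avoids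
all previously banned fibers as well as its own ban. -/
def Good (f : ∀ α, X → Y α) (g : (Σ α : ι, {P : Set (Y α) // PerfectSet P}) ↪ TT)
    (t : TT) (prev : ∀ u : TT, u < t → X × Option (Σ α, Y α))
    (p : X × Option (Σ α, Y α)) : Prop :=
  ∀ s, g s = t →
    ∃ y : Y s.1, p.2 = some ⟨s.1, y⟩ ∧ y ∈ s.2.1 ∧
      (∀ u (hu : u < t), f s.1 (prev u hu).1 ≠ y) ∧
      f s.1 p.1 ∈ s.2.1 ∧
      (∀ u (hu : u < t), ∀ b : Σ α, Y α, (prev u hu).2 = some b → f b.1 p.1 ≠ b.2) ∧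
      f s.1 p.1 ≠ y

lemma good_exists [∀ α, PolishSpace (Y α)]
    (hreg : Cardinal.continuum.{0}.IsRegular)
    (f : ∀ α, X → Y α)
    (hsurj : ∀ α, Function.Surjective (f α))
    (hfiber : ∀ α (y : Y α), Cardinal.mk ↥(f α ⁻¹' {y}) < Cardinal.continuum)
    (x₀ : X) (g : (Σ α : ι, {P : Set (Y α) // PerfectSet P}) ↪ TT)
    (t : TT) (prev : ∀ u : TT, u < t → X × Option (Σ α, Y α)) :
    ∃ p : X × Option (Σ α, Y α), Good f g t prev p := by
  classical
  by_cases h : ∃ s, g s = t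
  · obtain ⟨⟨α, P, hP⟩, hst⟩ := h
    have hsmall : #{u : TT // u < t} < Cardinal.continuum := mk_Iio_lt t
    -- choose y in P avoiding the image of previously chosen points
    set Aprev : Set X := Set.range (fun u : {u : TT // u < t} => (prev u.1 u.2).1) with hA
    have himg : #(f α '' Aprev) < Cardinal.continuum :=
      (mk_image_le.trans mk_range_le).trans_lt hsmall
    have hPcard : Cardinal.continuum ≤ #P := continuum_le_mk_perfect hP
    have hyex : ∃ y, y ∈ P \ f α '' Aprev := by
      by_contra hc
      push_neg at hc
      have hsub : P ⊆ f α '' Aprev := fun y hy => by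
        by_contra h2; exact hc y ⟨hy, h2⟩
      exact absurd (hPcard.trans (mk_le_mk_of_subset hsub)) (not_le.2 himg)
    obtain ⟨y, hyP, hyn⟩ := hyex
    -- the set of banned (index, point) pairs
    have hobs : ∀ (o : Option (Σ α, Y α)) (c : Σ α, Y α),
        c ∈ (o.elim ∅ fun d => ({d} : Set (Σ α, Y α))) ↔ o = some c := by
      rintro (_ | d) c <;> simp [eq_comm]
    set Bans : Set (Σ α, Y α) :=
      insert ⟨α, y⟩
        (⋃ u : {u : TT // u < t}, ((prev u.1 u.2).2).elim ∅ fun d => ({d} : Set (Σ α, Y α)))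
      with hB
    have hBu : #(⋃ u : {u : TT // u < t},
        ((prev u.1 u.2).2).elim ∅ fun d => ({d} : Set (Σ α, Y α))) < Cardinal.continuum := by
      refine (Cardinal.card_iUnion_lt_iff_forall_of_isRegular (α := Σ α : ι, Y α)
        (t := fun u : {u : TT // u < t} =>
          ((prev u.1 u.2).2).elim ∅ fun d => ({d} : Set (Σ α, Y α)))
        hreg hsmall).2 fun u => ?_
      rcases hp : (prev u.1 u.2).2 with _ | d
      · simpa [hp] using (Cardinal.aleph0_pos.trans Cardinal.aleph0_lt_continuum)
      · simp only [hp, Option.elim]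
        exact lt_of_le_of_lt Cardinal.mk_le_aleph0 Cardinal.aleph0_lt_continuum
    have hBcard : #Bans < Cardinal.continuum := by
      refine lt_of_le_of_lt Cardinal.mk_insert_le ?_
      exact Cardinal.add_lt_of_lt Cardinal.aleph0_le_continuum hBu
        (lt_of_lt_of_le Cardinal.one_lt_aleph0 Cardinal.aleph0_le_continuum)
    set BadX : Set X := ⋃ c : ↥Bans, f c.1.1 ⁻¹' {c.1.2} with hBad
    have hBadcard : #BadX < Cardinal.continuum := by
      rw [hBad]
      exact (Cardinal.card_iUnion_lt_iff_forall_of_isRegular (α := X)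
        (t := fun c : ↥Bans => f c.1.1 ⁻¹' {c.1.2}) hreg hBcard).2
        fun c => hfiber c.1.1 c.1.2
    have hPre : Cardinal.continuum ≤ #(f α ⁻¹' P) := by
      refine hPcard.trans (mk_le_of_injective (f := fun yp : P =>
        (⟨Function.surjInv (hsurj α) yp.1, by
          simp [Set.mem_preimage, Function.surjInv_eq (hsurj α), yp.2]⟩ : (f α ⁻¹' P))) ?_)
      intro a c hac
      apply Subtype.ext
      have := congrArg (f α) (congrArg Subtype.val hac)
      rwa [Function.surjInv_eq (hsurj α), Function.surjInv_eq (hsurj α)] at this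
    have hxex : ∃ x, x ∈ (f α ⁻¹' P) \ BadX := by
      by_contra hc
      push_neg at hc
      have hsub : (f α ⁻¹' P) ⊆ BadX := fun x hx => by
        by_contra h2; exact hc x ⟨hx, h2⟩
      exact absurd (hPre.trans (mk_le_mk_of_subset hsub)) (not_le.2 hBadcard)
    obtain ⟨x, hxP, hxB⟩ := hxex
    refine ⟨(x, some ⟨α, y⟩), ?_⟩
    intro s' hs'
    obtain rfl : s' = ⟨α, ⟨P, hP⟩⟩ := g.injective (hs'.trans hst.symm)
    refine ⟨y, rfl, hyP, ?_, hxP, ?_, ?_⟩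
    · intro u hu heq
      exact hyn ⟨(prev u hu).1, ⟨⟨u, hu⟩, rfl⟩, heq⟩
    · intro u hu c hc hfc
      apply hxB
      refine Set.mem_iUnion.2 ⟨⟨c, Set.mem_insert_iff.2 (Or.inr ?_)⟩, hfc⟩
      exact Set.mem_iUnion.2 ⟨⟨u, hu⟩, (hobs _ c).2 hc⟩
    · intro hfx
      exact hxB (Set.mem_iUnion.2 ⟨⟨⟨α, y⟩, Set.mem_insert _ _⟩, hfx⟩)
  · exact ⟨(x₀, none), fun s hs => absurd ⟨s, hs⟩ h⟩

end BernsteinAux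

theorem stmt0 {X : Type} [TopologicalSpace X] [PolishSpace X]
    (hreg : Cardinal.continuum.IsRegular)
    {ι : Type} (hι : Cardinal.mk ι = Cardinal.continuum)
    (Y : ι → Type) [∀ α, TopologicalSpace (Y α)] [∀ α, PolishSpace (Y α)]
    (f : ∀ α, X → Y α)
    (hsurj : ∀ α, Function.Surjective (f α))
    (hfiber : ∀ α (y : Y α), Cardinal.mk ↥(f α ⁻¹' {y}) < Cardinal.continuum) :
    ∃ A : Set X, ∀ α, IsBernstein ((f α) '' A) := by
  classical
  have hreg : Cardinal.continuum.{0}.IsRegular := BernsteinAux.isRegular_down hreg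
  rcases isEmpty_or_nonempty X with hX | hX
  · refine ⟨∅, fun α P hP => ?_⟩
    obtain ⟨y, -⟩ := hP.2
    obtain ⟨x, -⟩ := hsurj α y
    exact (hX.false x).elim
  obtain ⟨x₀⟩ := hX
  have hcard : #(Σ α : ι, {P : Set (Y α) // PerfectSet P}) ≤ #(BernsteinAux.TT) := by
    rw [BernsteinAux.mk_TT]
    calc #(Σ α : ι, {P : Set (Y α) // PerfectSet P})
        = Cardinal.sum (fun α : ι => #{P : Set (Y α) // PerfectSet P}) := Cardinal.mk_sigma _
      _ ≤ Cardinal.sum (fun _ : ι => Cardinal.continuum) :=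
          Cardinal.sum_le_sum _ _ fun α => BernsteinAux.mk_perfectSets_le
      _ = #ι * Cardinal.continuum := Cardinal.sum_const' _ _
      _ = Cardinal.continuum := by
          rw [hι, Cardinal.mul_eq_self Cardinal.aleph0_le_continuum]
  obtain ⟨g⟩ := (Cardinal.le_def _ _).mp hcard
  let body : ∀ t : BernsteinAux.TT,
      (∀ u, u < t → X × Option (Σ α, Y α)) → X × Option (Σ α, Y α) :=
    fun t prev => Classical.choose
      (BernsteinAux.good_exists hreg f hsurj hfiber x₀ g t prev)
  let F : BernsteinAux.TT → X × Option (Σ α, Y α) :=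
    IsWellFounded.fix ((· < ·) : BernsteinAux.TT → BernsteinAux.TT → Prop) body
  have hF : ∀ t, BernsteinAux.Good f g t (fun u _ => F u) (F t) := by
    intro t
    have heq := IsWellFounded.fix_eq ((· < ·) : BernsteinAux.TT → BernsteinAux.TT → Prop) body t
    have : F t = body t (fun u _ => F u) := heq
    rw [this]
    exact Classical.choose_spec
      (BernsteinAux.good_exists hreg f hsurj hfiber x₀ g t (fun u _ => F u))
  refine ⟨Set.range (fun s : Σ α : ι, {P : Set (Y α) // PerfectSet P} => (F (g s)).1), ?_⟩
  intro α P hP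
  set s : Σ α : ι, {P : Set (Y α) // PerfectSet P} := ⟨α, ⟨P, hP⟩⟩ with hsdef
  obtain ⟨y, hsome, hyP, hprev, hin, havoid, hne⟩ := hF (g s) s rfl
  constructor
  · exact ⟨f α (F (g s)).1, ⟨(F (g s)).1, ⟨s, rfl⟩, rfl⟩, hin⟩
  · refine ⟨y, hyP, ?_⟩
    rintro ⟨x, ⟨s', rfl⟩, hfx⟩
    have hfx' : f α (F (g s')).1 = y := hfx
    rcases lt_trichotomy (g s') (g s) with hlt | heq | hgt
    · exact hprev (g s') hlt hfx'
    · rw [heq] at hfx'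
      exact hne hfx'
    · obtain ⟨y', hsome', hyP', hprev', hin', havoid', hne'⟩ := hF (g s') s' rfl
      exact havoid' (g s) hgt ⟨α, y⟩ hsome hfx'
end

section
/- Assume that the continuum 𝔠 is a regular cardinal. Then there exists a set A ⊆ ω^ω (the Baire space) such that for every cofinite subset C ⊆ ω the image of A under the restriction map f_C : ω^ω → ω^C, f_C(x) = x↾C, is a Bernstein set in ω^C (with the product topology). -/
open Set Function Cardinal

noncomputable section BernsteinAux

/-- Restriction of `x : ℕ → ℕ` to a subset `C`. -/
def bRes (C : Set ℕ) (x : ℕ → ℕ) : ↥C → ℕ := fun c => x c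

/-- A pair of a cofinite subset `C ⊆ ℕ` together with a continuous injection from
Cantor space into `ω^C`. -/
structure BPair where
  C : Set ℕ
  hC : Cᶜ.Finite
  f : (ℕ → Bool) → (↥C → ℕ)
  hcont : Continuous f
  hinj : Function.Injective f

lemma mk_cantor : #(ℕ → Bool) = continuum := by
  rw [Cardinal.mk_arrow]
  simp [Cardinal.two_power_aleph0]

lemma mk_pi_subset_le (C : Set ℕ) : #(↥C → ℕ) ≤ continuum := by
  calc #(↥C → ℕ) = ℵ₀ ^ Cardinal.lift.{0} #(↥C) := by simp [Cardinal.mk_arrow]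
  _ ≤ ℵ₀ ^ ℵ₀ :=
      Cardinal.power_le_power_left aleph0_ne_zero (by simpa using Cardinal.mk_le_aleph0 (α := ↥C))
  _ = 𝔠 := by rw [Cardinal.power_self_eq le_rfl, Cardinal.two_power_aleph0]

instance : Nonempty BPair := by
  refine ⟨⟨Set.univ, by simp, fun b c => (b c.1).toNat, ?_, ?_⟩⟩
  · refine continuous_pi fun c => ?_
    show Continuous (Bool.toNat ∘ fun a : ℕ → Bool => a c.1)
    exact continuous_of_discreteTopology.comp (continuous_apply c.1)
  · intro a b h
    funext n
    have h' := congrFun h ⟨n, trivial⟩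
    cases ha : a n <;> cases hb : b n <;> simp_all [Bool.toNat]

lemma mk_BPair_le : #BPair ≤ continuum := by
  obtain ⟨D, hDc, hDd⟩ := TopologicalSpace.exists_countable_dense (ℕ → Bool)
  haveI := hDc.to_subtype
  have hinj : Function.Injective
      (fun p : BPair => (⟨p.C, fun d : ↥D => p.f d⟩ : Σ C : Set ℕ, (↥D → (↥C → ℕ)))) := by
    rintro ⟨C₁, h₁, f₁, c₁, i₁⟩ ⟨C₂, h₂, f₂, c₂, i₂⟩ h
    obtain ⟨rfl, h2⟩ := Sigma.mk.inj_iff.mp h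
    have h2' : (fun d : ↥D => f₁ d) = fun d : ↥D => f₂ d := eq_of_heq h2
    have : f₁ = f₂ := by
      apply Continuous.ext_on hDd c₁ c₂
      intro b hb
      exact congrFun h2' ⟨b, hb⟩
    subst this
    rfl
  have h1 : #BPair ≤ #(Σ C : Set ℕ, (↥D → (↥C → ℕ))) := Cardinal.mk_le_of_injective hinj
  refine h1.trans ?_
  rw [Cardinal.mk_sigma]
  calc (Cardinal.sum fun C : Set ℕ => #(↥D → (↥C → ℕ)))
      ≤ Cardinal.sum fun _ : Set ℕ => 𝔠 := by
        apply Cardinal.sum_le_sum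
        intro C
        calc #(↥D → (↥C → ℕ)) = Cardinal.lift.{0} #(↥C → ℕ) ^ Cardinal.lift.{0} #(↥D) :=
              Cardinal.mk_arrow _ _
        _ = #(↥C → ℕ) ^ #(↥D) := by simp
        _ ≤ 𝔠 ^ #(↥D) := Cardinal.power_le_power_right (mk_pi_subset_le C)
        _ ≤ 𝔠 ^ (ℵ₀ : Cardinal) :=
            Cardinal.power_le_power_left Cardinal.continuum_ne_zero (Cardinal.mk_le_aleph0)
        _ = 𝔠 := Cardinal.continuum_power_aleph0
    _ = #(Set ℕ) * 𝔠 := Cardinal.sum_const' _ _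
    _ = 𝔠 * 𝔠 := by rw [Cardinal.mk_set, Cardinal.mk_nat, Cardinal.two_power_aleph0]
    _ = 𝔠 := Cardinal.mul_eq_self Cardinal.aleph0_le_continuum

/-- Index type: the canonical well-order of length `𝔠`. -/
abbrev BIdx : Type := continuum.ord.ToType

lemma countable_fiber (C : Set ℕ) (hC : Cᶜ.Finite) (y : ↥C → ℕ) :
    {x : ℕ → ℕ | bRes C x = y}.Countable := by
  haveI := hC.to_subtype
  rw [← Set.countable_coe_iff]
  have hinj : Function.Injective
      (fun x : {x : ℕ → ℕ // bRes C x = y} => (fun c : ↥(Cᶜ) => x.1 c.1)) := by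
    rintro ⟨x, hx⟩ ⟨z, hz⟩ h
    apply Subtype.ext
    funext n
    by_cases hn : n ∈ C
    · have := congrFun (hx.trans hz.symm) ⟨n, hn⟩
      exact this
    · exact congrFun h ⟨n, hn⟩
  exact hinj.countable

lemma exists_not_mem_of_small {β : Type} {f : (ℕ → Bool) → β} (hf : Function.Injective f)
    (S : Set β) (hS : #S < continuum) : ∃ b, f b ∉ S := by
  by_contra h
  push_neg at h
  have hinj : Function.Injective (fun b => (⟨f b, h b⟩ : S)) := by
    intro a b hab
    exact hf (congrArg Subtype.val hab)
  have := Cardinal.mk_le_of_injective hinj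
  rw [mk_cantor] at this
  exact absurd (this.trans_lt hS) (lt_irrefl _)

/-- The property that the pair `p = (x_i, Y_i)` must satisfy at stage `i`. -/
def Good (e : BIdx → BPair) (i : BIdx) (prev : ∀ j : BIdx, j < i → (ℕ → ℕ) × (ℕ → ℕ))
    (p : (ℕ → ℕ) × (ℕ → ℕ)) : Prop :=
  bRes (e i).C p.2 ∈ range (e i).f ∧
  (∀ j, ∀ h : j < i, bRes (e i).C p.2 ≠ bRes (e i).C (prev j h).1) ∧
  bRes (e i).C p.1 ∈ range (e i).f ∧
  (∀ j, ∀ h : j < i, bRes (e j).C p.1 ≠ bRes (e j).C (prev j h).2) ∧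
  bRes (e i).C p.1 ≠ bRes (e i).C p.2

lemma good_exists (e : BIdx → BPair) (i : BIdx)
    (prev : ∀ j : BIdx, j < i → (ℕ → ℕ) × (ℕ → ℕ)) : ∃ p, Good e i prev p := by
  classical
  -- choose Y (the forbidden point)
  have hS : #(Set.range (fun j : ↥(Iio i) => bRes (e i).C (prev j.1 j.2).1)) < 𝔠 :=
    Cardinal.mk_range_le.trans_lt (Cardinal.mk_Iio_ord_toType i)
  obtain ⟨b₀, hb₀⟩ := exists_not_mem_of_small (e i).hinj _ hS
  set Y : ℕ → ℕ := fun n => if h : n ∈ (e i).C then (e i).f b₀ ⟨n, h⟩ else 0 with hYdef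
  have hYres : bRes (e i).C Y = (e i).f b₀ := funext fun c => dif_pos c.2
  -- the candidate map g
  set g : (ℕ → Bool) → (ℕ → ℕ) :=
    fun b n => if h : n ∈ (e i).C then (e i).f b ⟨n, h⟩ else 0 with hgdef
  have hgres : ∀ b, bRes (e i).C (g b) = (e i).f b := fun b => funext fun c => dif_pos c.2
  have hg : Function.Injective g := by
    intro a b hab
    apply (e i).hinj
    rw [← hgres a, ← hgres b, hab]
  -- the forbidden set
  set U1 : Set (ℕ → ℕ) :=
    ⋃ j : ↥(Iio i), {x | bRes (e j.1).C x = bRes (e j.1).C (prev j.1 j.2).2} with hU1def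
  have hU1 : #U1 < 𝔠 := by
    rcases isEmpty_or_nonempty (↥(Iio i)) with hιe | hιn
    · rw [hU1def, Set.iUnion_of_empty, Cardinal.mk_emptyCollection]
      exact Cardinal.continuum_pos
    · refine (Cardinal.mk_iUnion_le _).trans_lt
        (Cardinal.mul_lt_of_lt Cardinal.aleph0_le_continuum (Cardinal.mk_Iio_ord_toType i) ?_)
      refine lt_of_le_of_lt (ciSup_le' fun j => ?_) Cardinal.aleph0_lt_continuum
      rw [Cardinal.mk_le_aleph0_iff, Set.countable_coe_iff]
      exact countable_fiber _ (e j.1).hC _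
  set U2 : Set (ℕ → ℕ) := {x | bRes (e i).C x = (e i).f b₀} with hU2def
  have hU2 : #U2 < 𝔠 := by
    refine lt_of_le_of_lt ?_ Cardinal.aleph0_lt_continuum
    rw [Cardinal.mk_le_aleph0_iff, Set.countable_coe_iff]
    exact countable_fiber _ (e i).hC _
  have hU : #↥(U1 ∪ U2) < 𝔠 :=
    (Cardinal.mk_union_le _ _).trans_lt
      (Cardinal.add_lt_of_lt Cardinal.aleph0_le_continuum hU1 hU2)
  obtain ⟨b₁, hb₁⟩ := exists_not_mem_of_small hg _ hU
  refine ⟨⟨g b₁, Y⟩, ?_, ?_, ?_, ?_, ?_⟩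
  · rw [hYres]; exact mem_range_self b₀
  · intro j hj hcon
    rw [hYres] at hcon
    exact hb₀ ⟨⟨j, hj⟩, hcon.symm⟩
  · rw [hgres]; exact mem_range_self b₁
  · intro j hj hcon
    exact hb₁ (Set.mem_union_left _ (Set.mem_iUnion.mpr ⟨⟨j, hj⟩, hcon⟩))
  · intro hcon
    rw [hYres] at hcon
    exact hb₁ (Set.mem_union_right _ hcon)

/-- The transfinite sequence of pairs `(x_i, Y_i)`. -/
def bSeq (e : BIdx → BPair) : BIdx → (ℕ → ℕ) × (ℕ → ℕ) :=
  (wellFounded_lt).fix (fun i rec => Classical.choose (good_exists e i rec))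

lemma bSeq_spec (e : BIdx → BPair) (i : BIdx) :
    bRes (e i).C (bSeq e i).2 ∈ range (e i).f ∧
    (∀ j, j < i → bRes (e i).C (bSeq e i).2 ≠ bRes (e i).C (bSeq e j).1) ∧
    bRes (e i).C (bSeq e i).1 ∈ range (e i).f ∧
    (∀ j, j < i → bRes (e j).C (bSeq e i).1 ≠ bRes (e j).C (bSeq e j).2) ∧
    bRes (e i).C (bSeq e i).1 ≠ bRes (e i).C (bSeq e i).2 := by
  have h : bSeq e i = Classical.choose (good_exists e i (fun j _ => bSeq e j)) :=
    WellFounded.fix_eq _ _ _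
  have hspec := Classical.choose_spec (good_exists e i (fun j _ => bSeq e j))
  rw [← h] at hspec
  exact hspec

lemma perfect_inj_from_cantor (C : Set ℕ) {P : Set (↥C → ℕ)} (hP : Perfect P)
    (hne : P.Nonempty) :
    ∃ f : (ℕ → Bool) → (↥C → ℕ), range f ⊆ P ∧ Continuous f ∧ Function.Injective f := by
  letI := TopologicalSpace.upgradeIsCompletelyMetrizable (↥C → ℕ)
  exact hP.exists_nat_bool_injection hne

end BernsteinAux

theorem stmt1 (hreg : Cardinal.continuum.IsRegular) :
    ∃ A : Set (ℕ → ℕ), ∀ C : Set ℕ, Cᶜ.Finite →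
      IsBernstein ((fun (x : ℕ → ℕ) (c : C) => x c) '' A) := by
  classical
  obtain ⟨emb⟩ := (Cardinal.le_def BPair BIdx).mp
    (mk_BPair_le.trans_eq (Cardinal.mk_ord_toType _).symm)
  set e : BIdx → BPair := Function.invFun emb with hedef
  have he : Function.Surjective e := Function.invFun_surjective emb.injective
  refine ⟨Set.range (fun i => (bSeq e i).1), ?_⟩
  intro C hC P hP
  obtain ⟨f, hfP, hfc, hfi⟩ := perfect_inj_from_cantor C hP.1 hP.2
  obtain ⟨i, hi⟩ := he ⟨C, hC, f, hfc, hfi⟩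
  have spec := bSeq_spec e i
  rw [hi] at spec
  constructor
  · exact ⟨bRes C (bSeq e i).1, ⟨(bSeq e i).1, ⟨i, rfl⟩, rfl⟩, hfP spec.2.2.1⟩
  · refine ⟨bRes C (bSeq e i).2, hfP spec.1, ?_⟩
    rintro ⟨x, ⟨j, rfl⟩, hxy⟩
    have hxy' : bRes C (bSeq e j).1 = bRes C (bSeq e i).2 := hxy
    rcases lt_trichotomy j i with h | h | h
    · exact spec.2.1 j h hxy'.symm
    · subst h
      exact spec.2.2.2.2 hxy'
    · have h4 := (bSeq_spec e j).2.2.2.1 i h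
      rw [hi] at h4
      exact h4 hxy'
end

section
/- Let X and X₀ be Polish spaces and f : X → X₀ a continuous function whose image f[X], with the subspace topology, is a Polish space. Then for every Bernstein set A ⊆ X the image f[A] contains a set which is a Bernstein set in f[X]. -/
open Set Filter Topology Cardinal Function

namespace BernsteinAux

/-- The "cylinder" over `x`: sequences whose even coordinates follow `x`. -/
def Cyl (x : ℕ → Bool) : Set (ℕ → Bool) := {y | ∀ n, y (2 * n) = x n}

lemma cyl_nonempty (x : ℕ → Bool) : (Cyl x).Nonempty :=
  ⟨fun k => x (k / 2), fun n => by simp [Nat.mul_div_cancel_left n (by norm_num : 0 < 2)]⟩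

lemma cyl_closed (x : ℕ → Bool) : IsClosed (Cyl x) := by
  have : Cyl x = ⋂ n, (fun y : ℕ → Bool => y (2 * n)) ⁻¹' {x n} := by
    ext y; simp [Cyl]
  rw [this]
  exact isClosed_iInter fun n => (isClosed_singleton).preimage (continuous_apply _)

lemma cyl_compact (x : ℕ → Bool) : IsCompact (Cyl x) :=
  (cyl_closed x).isCompact

lemma flip_tendsto (a : ℕ → Bool) :
    Tendsto (fun m => Function.update a (2 * m + 1) (!(a (2 * m + 1)))) atTop (𝓝 a) := by
  rw [tendsto_pi_nhds]
  intro k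
  apply tendsto_const_nhds.congr'
  filter_upwards [eventually_ge_atTop (k + 1)] with m hm
  have : (2 * m + 1) ≠ k := by omega
  simp [Function.update, this.symm]

lemma flip_mem {x a : ℕ → Bool} (ha : a ∈ Cyl x) (m : ℕ) :
    Function.update a (2 * m + 1) (!(a (2 * m + 1))) ∈ Cyl x := by
  intro n
  have : 2 * n ≠ 2 * m + 1 := by omega
  rw [Function.update_of_ne this]
  exact ha n

lemma flip_ne (a : ℕ → Bool) (m : ℕ) :
    Function.update a (2 * m + 1) (!(a (2 * m + 1))) ≠ a := by
  intro h
  have := congrFun h (2 * m + 1)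
  simp at this

lemma perfect_image_cyl {Y : Type*} [TopologicalSpace Y] [T2Space Y] {g : (ℕ → Bool) → Y}
    (hg : Continuous g) (hinj : Function.Injective g) (x : ℕ → Bool) :
    Perfect (g '' Cyl x) ∧ (g '' Cyl x).Nonempty := by
  refine ⟨⟨((cyl_compact x).image hg).isClosed, ?_⟩, (cyl_nonempty x).image g⟩
  rintro z ⟨a, ha, rfl⟩
  rw [accPt_iff_nhds]
  intro U hU
  have h2 : Tendsto (fun m => g (Function.update a (2 * m + 1) (!(a (2 * m + 1))))) atTop
      (𝓝 (g a)) := (hg.tendsto a).comp (flip_tendsto a)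
  obtain ⟨m, hm⟩ := (h2.eventually_mem hU).exists
  exact ⟨g (Function.update a (2 * m + 1) (!(a (2 * m + 1)))), ⟨hm, ⟨_, flip_mem ha m, rfl⟩⟩,
    fun h => flip_ne a m (hinj h)⟩

lemma disjoint_image_cyl {Y : Type*} {g : (ℕ → Bool) → Y} (hinj : Function.Injective g)
    {x x' : ℕ → Bool} (h : x ≠ x') : Disjoint (g '' Cyl x) (g '' Cyl x') := by
  rw [Set.disjoint_left]
  rintro z ⟨a, ha, rfl⟩ ⟨b, hb, hba⟩
  apply h
  funext n
  rw [← ha n, ← hb n, hinj hba]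

lemma mk_cantor : #(ℕ → Bool) = Cardinal.continuum := by
  rw [Cardinal.mk_arrow]; simp [Cardinal.two_power_aleph0]

/-- Among continuum many pairwise disjoint sets, one avoids any small set. -/
lemma exists_avoid {Y : Type} (Q : (ℕ → Bool) → Set Y)
    (hdisj : ∀ x x', x ≠ x' → Disjoint (Q x) (Q x')) (s : Set Y)
    (hs : #s < Cardinal.continuum) : ∃ x, Q x ∩ s = ∅ := by
  by_contra hcon
  push_neg at hcon
  have hne : ∀ x, (Q x ∩ s).Nonempty := hcon
  choose p hp using hne
  have hinj : Function.Injective (fun x => (⟨p x, (hp x).2⟩ : s)) := by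
    intro x x' h
    by_contra hxx
    have := (hdisj x x' hxx).ne_of_mem (hp x).1 (hp x').1
    exact this (congrArg Subtype.val h)
  have := Cardinal.mk_le_of_injective hinj
  rw [mk_cantor] at this
  exact absurd hs (not_lt.2 this)

/-- A nonempty perfect set in a Polish space is uncountable. -/
lemma perfect_not_countable {Y : Type} [TopologicalSpace Y] [PolishSpace Y] {P : Set Y}
    (hP : PerfectSet P) : ¬P.Countable := by
  letI := TopologicalSpace.upgradeIsCompletelyMetrizable Y
  obtain ⟨g, hgr, _, hginj⟩ := hP.1.exists_nat_bool_injection hP.2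
  intro hcnt
  have hinj : Function.Injective (fun x => (⟨g x, hgr ⟨x, rfl⟩⟩ : P)) := fun x x' h =>
    hginj (congrArg Subtype.val h)
  have h1 := Cardinal.mk_le_of_injective hinj
  rw [mk_cantor] at h1
  have h2 : #P ≤ ℵ₀ := Cardinal.le_aleph0_iff_set_countable.2 hcnt
  exact absurd (h1.trans h2) (not_le.2 Cardinal.aleph0_lt_continuum)

/-- `g '' A` meets every perfect set when `g` is a continuous surjection between
Polish spaces and `A` is Bernstein. -/
lemma image_meets {X Y : Type} [TopologicalSpace X] [PolishSpace X]
    [TopologicalSpace Y] [PolishSpace Y] {g : X → Y} (hg : Continuous g)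
    (hsurj : Function.Surjective g) {A : Set X} (hA : IsBernstein A)
    {P : Set Y} (hP : PerfectSet P) : ((g '' A) ∩ P).Nonempty := by
  have hF : IsClosed (g ⁻¹' P) := hP.1.closed.preimage hg
  have hFnc : ¬(g ⁻¹' P).Countable := by
    intro h
    have : P.Countable := by
      rw [← Set.image_preimage_eq P hsurj]
      exact h.image g
    exact perfect_not_countable hP this
  obtain ⟨D, hDperf, hDne, hDF⟩ := exists_perfect_nonempty_of_isClosed_of_not_countable hF hFnc
  obtain ⟨a, haA, haD⟩ := (hA D ⟨hDperf, hDne⟩).1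
  exact ⟨g a, ⟨a, haA, rfl⟩, hDF haD⟩

/-- In a second countable space there are at most continuum many perfect sets. -/
lemma mk_perfect_le {Y : Type} [TopologicalSpace Y] [SecondCountableTopology Y] :
    #{P : Set Y // PerfectSet P} ≤ Cardinal.continuum := by
  obtain ⟨b, hbc, -, hbb⟩ := TopologicalSpace.exists_countable_basis Y
  set Φ : {P : Set Y // PerfectSet P} → Set b := fun P => {U : b | (U : Set Y) ∩ P.1 = ∅}
  have hsub : ∀ P P' : {P : Set Y // PerfectSet P}, Φ P = Φ P' → P'.1 ⊆ P.1 := by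
    intro P P' h z hz
    by_contra hzP
    obtain ⟨U, hUb, hzU, hUsub⟩ := hbb.exists_subset_of_mem_open hzP P.2.1.closed.isOpen_compl
    have hUP : (⟨U, hUb⟩ : b) ∈ Φ P := by
      simp only [Φ, mem_setOf_eq]
      rw [eq_empty_iff_forall_notMem]
      exact fun y ⟨hyU, hyP⟩ => hUsub hyU hyP
    rw [h] at hUP
    have : z ∈ (U : Set Y) ∩ P'.1 := ⟨hzU, hz⟩
    rw [hUP] at this
    exact this
  have hΦinj : Function.Injective Φ := by
    intro P P' h
    exact Subtype.ext (le_antisymm (hsub P' P h.symm) (hsub P P' h))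
  calc #{P : Set Y // PerfectSet P} ≤ #(Set b) := Cardinal.mk_le_of_injective hΦinj
    _ = 2 ^ #b := Cardinal.mk_set
    _ ≤ 2 ^ ℵ₀ := by
        apply Cardinal.power_le_power_left (by norm_num)
        exact Cardinal.le_aleph0_iff_set_countable.2 hbc
    _ = Cardinal.continuum := Cardinal.two_power_aleph0

/-- The key recursive choice: inside any perfect set we can find a point of `T` and
another point, both avoiding any given small set. -/
lemma step_lemma {Y : Type} [TopologicalSpace Y] [PolishSpace Y] {T : Set Y}
    (hmeet : ∀ P : Set Y, PerfectSet P → (T ∩ P).Nonempty) :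
    ∀ P : Set Y, PerfectSet P → ∀ s : Set Y, #s < Cardinal.continuum →
      ∃ pq : Y × Y, pq.1 ∈ T ∧ pq.1 ∈ P ∧ pq.2 ∈ P ∧ pq.1 ∉ s ∧ pq.2 ∉ s ∧ pq.1 ≠ pq.2 := by
  intro P hP s hs
  letI := TopologicalSpace.upgradeIsCompletelyMetrizable Y
  obtain ⟨g, hgr, hgc, hginj⟩ := hP.1.exists_nat_bool_injection hP.2
  obtain ⟨x0, hx0⟩ := exists_avoid (fun x => g '' Cyl x)
    (fun x x' h => disjoint_image_cyl hginj h) s hs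
  obtain ⟨hQperf, hQne⟩ := perfect_image_cyl hgc hginj x0
  have hQP : g '' Cyl x0 ⊆ P := (Set.image_subset_range g _).trans hgr
  have hQs : ∀ z ∈ g '' Cyl x0, z ∉ s := fun z hz hzs =>
    (Set.eq_empty_iff_forall_notMem.1 hx0 z) ⟨hz, hzs⟩
  obtain ⟨p, hpT, hpQ⟩ := hmeet (g '' Cyl x0) ⟨hQperf, hQne⟩
  have hacc := hQperf.acc p hpQ
  rw [accPt_iff_nhds] at hacc
  obtain ⟨q, ⟨-, hqQ⟩, hqp⟩ := hacc Set.univ Filter.univ_mem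
  exact ⟨(p, q), hpT, hQP hpQ, hQP hqQ, hQs p hpQ, hQs q hqQ, fun h => hqp h.symm⟩

/-- Abstract transfinite construction of a Bernstein subset of `T`. -/
lemma exists_bernstein_subset {Y : Type} [TopologicalSpace Y] [SecondCountableTopology Y]
    (T : Set Y)
    (hstep : ∀ P : Set Y, PerfectSet P → ∀ s : Set Y, #s < Cardinal.continuum →
      ∃ pq : Y × Y, pq.1 ∈ T ∧ pq.1 ∈ P ∧ pq.2 ∈ P ∧ pq.1 ∉ s ∧ pq.2 ∉ s ∧ pq.1 ≠ pq.2) :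
    ∃ S : Set Y, IsBernstein S ∧ S ⊆ T := by
  classical
  by_cases hex : ∃ P : Set Y, PerfectSet P
  swap
  · exact ⟨∅, fun P hP => absurd ⟨P, hP⟩ hex, empty_subset _⟩
  obtain ⟨P0, hP0⟩ := hex
  obtain ⟨y0, -⟩ := hP0.2
  choose pick h1 h2 h3 h4 h5 h6 using hstep
  obtain ⟨e⟩ := (Cardinal.le_def {P : Set Y // PerfectSet P} Cardinal.continuum.ord.ToType).1
    (by rw [Cardinal.mk_ord_toType]; exact mk_perfect_le)
  set O := Cardinal.continuum.ord.ToType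
  set ι := {P : Set Y // PerfectSet P}
  -- the set of previously chosen points
  set prevSet : ∀ o : O, (∀ o', o' < o → Y × Y) → Set Y := fun o prev =>
    {z | ∃ o', ∃ h : o' < o, z = (prev o' h).1 ∨ z = (prev o' h).2} with hprevSet
  have hprev : ∀ (o : O) (prev : ∀ o', o' < o → Y × Y),
      #(prevSet o prev) < Cardinal.continuum := by
    intro o prev
    have hsub : prevSet o prev ⊆ Set.range (fun z : (Set.Iio o) × Bool =>
        if z.2 then (prev z.1 z.1.2).1 else (prev z.1 z.1.2).2) := by
      rintro z ⟨o', h, (rfl | rfl)⟩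
      · exact ⟨⟨⟨o', h⟩, true⟩, rfl⟩
      · exact ⟨⟨⟨o', h⟩, false⟩, rfl⟩
    calc #(prevSet o prev) ≤ #(Set.range fun z : (Set.Iio o) × Bool =>
            if z.2 then (prev z.1 z.1.2).1 else (prev z.1 z.1.2).2) :=
          Cardinal.mk_le_mk_of_subset hsub
      _ ≤ #((Set.Iio o) × Bool) := Cardinal.mk_range_le
      _ = #(Set.Iio o) * 2 := by rw [Cardinal.mk_prod]; simp
      _ < Cardinal.continuum := Cardinal.mul_lt_of_lt Cardinal.aleph0_le_continuum
          (Cardinal.mk_Iio_ord_toType o)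
          (lt_of_lt_of_le (by exact_mod_cast Cardinal.nat_lt_aleph0 2)
            Cardinal.aleph0_le_continuum)
  set step : ∀ o : O, (∀ o', o' < o → Y × Y) → Y × Y := fun o prev =>
    if h : ∃ P : ι, e P = o then pick h.choose.1 h.choose.2 (prevSet o prev) (hprev o prev)
    else (y0, y0) with hstepdef
  set F : O → Y × Y := WellFoundedLT.fix step with hFdef
  have hFeq : ∀ o, F o = step o (fun o' _ => F o') := WellFoundedLT.fix_eq step
  have hinv : ∀ P : ι, F (e P) = pick P.1 P.2
      (prevSet (e P) (fun o' _ => F o')) (hprev (e P) _) := by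
    intro P
    have h : ∃ P' : ι, e P' = e P := ⟨P, rfl⟩
    rw [hFeq, hstepdef]
    simp only [dif_pos h]
    have hc : h.choose = P := e.injective h.choose_spec
    rw [hc]
  refine ⟨{z : Y | ∃ P : ι, (F (e P)).1 = z}, fun P hP => ?_, ?_⟩
  · have hF := hinv ⟨P, hP⟩
    constructor
    · exact ⟨(F (e ⟨P, hP⟩)).1, ⟨⟨P, hP⟩, rfl⟩, by rw [hF]; exact h2 P hP _ _⟩
    · refine ⟨(F (e ⟨P, hP⟩)).2, by rw [hF]; exact h3 P hP _ _, ?_⟩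
      rintro ⟨P', hP'⟩
      rcases lt_trichotomy (e P') (e ⟨P, hP⟩) with hlt | heq | hgt
      · have hmem : (F (e ⟨P, hP⟩)).2 ∈ prevSet (e ⟨P, hP⟩) (fun o' _ => F o') :=
          ⟨e P', hlt, Or.inl hP'.symm⟩
        rw [hF] at hmem
        exact h5 P hP _ _ hmem
      · have hPP : P' = ⟨P, hP⟩ := e.injective heq
        rw [hPP, hF] at hP'
        exact h6 P hP _ _ hP'
      · have hmem : (F (e ⟨P, hP⟩)).2 ∈ prevSet (e P') (fun o' _ => F o') :=
          ⟨e ⟨P, hP⟩, hgt, Or.inr rfl⟩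
        rw [← hP'] at hmem
        rw [hinv P'] at hmem
        exact h4 P'.1 P'.2 _ _ hmem
  · rintro z ⟨P', rfl⟩
    rw [hinv P']
    exact h1 P'.1 P'.2 _ _

end BernsteinAux

theorem stmt3 {X X₀ : Type} [TopologicalSpace X] [PolishSpace X]
    [TopologicalSpace X₀] [PolishSpace X₀]
    (f : X → X₀) (hf : Continuous f) (hPolish : PolishSpace ↥(Set.range f))
    (A : Set X) (hA : IsBernstein A) :
    ∃ S : Set ↥(Set.range f), IsBernstein S ∧ Subtype.val '' S ⊆ f '' A := by
  haveI := hPolish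
  have hgc : Continuous (Set.rangeFactorization f) := hf.subtype_mk _
  have hmeet : ∀ P : Set ↥(Set.range f), PerfectSet P →
      ((Set.rangeFactorization f '' A) ∩ P).Nonempty :=
    fun P hP => BernsteinAux.image_meets hgc Set.rangeFactorization_surjective hA hP
  obtain ⟨S, hSB, hST⟩ := BernsteinAux.exists_bernstein_subset
    (Set.rangeFactorization f '' A) (BernsteinAux.step_lemma hmeet)
  refine ⟨S, hSB, ?_⟩
  rintro z ⟨y, hyS, rfl⟩
  obtain ⟨a, haA, rfl⟩ := hST hyS
  exact ⟨a, haA, rfl⟩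
end

section
/- Let X ⊆ X₀ be Polish spaces and let (F, 𝕀) be a fine pair in X ⊆ X₀. Assume: (1) |F| ≤ sup{Cof(I_f) : f ∈ F}, and (2) sup{Cof(I_f) : f ∈ F} ≤ Cov(F, 𝕀). Then there exists a set A ⊆ X such that for every f ∈ F the image f[A] is completely I_f-nonmeasurable in f[X]. -/
open Cardinal

/-- `B` is a Borel subset of the subspace `Y` of `X₀`: it is the trace on `Y`
of a Borel subset of `X₀`. -/
def BorelIn {X₀ : Type*} [MeasurableSpace X₀] (Y B : Set X₀) : Prop :=
  ∃ C : Set X₀, MeasurableSet C ∧ B = C ∩ Y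

/-- `I` is a σ-ideal on the subspace `Y` of `X₀` containing all singletons of `Y`. -/
structure SigmaIdealOn {X₀ : Type*} (Y : Set X₀) (I : Set (Set X₀)) : Prop where
  subset_of_mem : ∀ A ∈ I, A ⊆ Y
  mem_of_subset : ∀ A ∈ I, ∀ B ⊆ A, B ∈ I
  iUnion_mem : ∀ A : ℕ → Set X₀, (∀ n, A n ∈ I) → (⋃ n, A n) ∈ I
  singleton_mem : ∀ y ∈ Y, ({y} : Set X₀) ∈ I

/-- `I` (a σ-ideal on the subspace `Y`) has a Borel base: every member of `I`
is contained in a Borel (in `Y`) member of `I`. -/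
def HasBorelBase {X₀ : Type*} [MeasurableSpace X₀] (Y : Set X₀) (I : Set (Set X₀)) : Prop :=
  ∀ A ∈ I, ∃ B ∈ I, BorelIn Y B ∧ A ⊆ B

/-- `A` is completely `I`-nonmeasurable in the subspace `Y`: every Borel (in `Y`)
set not in `I` meets both `A` and its complement. -/
def CompletelyNonmeasurable {X₀ : Type*} [MeasurableSpace X₀]
    (Y : Set X₀) (I : Set (Set X₀)) (A : Set X₀) : Prop :=
  ∀ B : Set X₀, BorelIn Y B → B ∉ I → (A ∩ B).Nonempty ∧ (B \ A).Nonempty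

/-- `Cof(I)`: the least cardinality of a family of Borel (in `Y`) sets not in `I`
such that every Borel (in `Y`) set not in `I` contains a member of the family. -/
noncomputable def Cof {X₀ : Type*} [MeasurableSpace X₀] (Y : Set X₀) (I : Set (Set X₀)) :
    Cardinal :=
  sInf { c | ∃ 𝓑 : Set (Set X₀), Cardinal.mk ↥𝓑 = c ∧ (∀ B ∈ 𝓑, BorelIn Y B ∧ B ∉ I) ∧
    ∀ A : Set X₀, BorelIn Y A → A ∉ I → ∃ B ∈ 𝓑, B ⊆ A }

/-- The pair `(F, 𝕀)` is fine in `S ⊆ X₀`: for each `f ∈ F`, the image `f[S]`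
is a Polish subspace of `X₀` and `𝕀 f` is a σ-ideal with Borel base on `f[S]`
containing all singletons. -/
def FinePair {X₀ : Type*} [TopologicalSpace X₀] [MeasurableSpace X₀] (S : Set X₀)
    (F : Set (↥S → X₀)) (𝕀 : (↥S → X₀) → Set (Set X₀)) : Prop :=
  ∀ f ∈ F, PolishSpace ↥(Set.range f) ∧ SigmaIdealOn (Set.range f) (𝕀 f) ∧
    HasBorelBase (Set.range f) (𝕀 f)

/-- `Cov(F, 𝕀)`: the least cardinality of a set `Z ⊆ X₀` for which there are `f ∈ F`,
a Borel (in `f[S]`) set `B ∉ 𝕀 f` and `F₀ ⊆ F` with `|F₀| ≤ |Z|` such that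
`f⁻¹[B] ⊆ ⋃_{h ∈ F₀} h⁻¹[Z]`. -/
noncomputable def CovPair {X₀ : Type*} [MeasurableSpace X₀] {S : Set X₀}
    (F : Set (↥S → X₀)) (𝕀 : (↥S → X₀) → Set (Set X₀)) : Cardinal :=
  sInf { c | ∃ Z : Set X₀, Cardinal.mk ↥Z = c ∧ ∃ f ∈ F, ∃ B : Set X₀,
    BorelIn (Set.range f) B ∧ B ∉ 𝕀 f ∧
    ∃ F₀ ⊆ F, Cardinal.mk ↥F₀ ≤ Cardinal.mk ↥Z ∧ f ⁻¹' B ⊆ ⋃ h ∈ F₀, h ⁻¹' Z }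

namespace Stmt4Aux
variable {X₀ : Type*}

lemma cof_nonempty [MeasurableSpace X₀] (Y : Set X₀) (I : Set (Set X₀)) :
    { c | ∃ 𝓑 : Set (Set X₀), Cardinal.mk ↥𝓑 = c ∧ (∀ B ∈ 𝓑, BorelIn Y B ∧ B ∉ I) ∧
      ∀ A : Set X₀, BorelIn Y A → A ∉ I → ∃ B ∈ 𝓑, B ⊆ A }.Nonempty :=
  ⟨_, {B | BorelIn Y B ∧ B ∉ I}, rfl, fun _ hB => hB,
    fun A hA hA' => ⟨A, ⟨hA, hA'⟩, subset_rfl⟩⟩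

lemma sigmaIdeal_union {Y : Set X₀} {I : Set (Set X₀)} (hI : SigmaIdealOn Y I)
    {A B : Set X₀} (hA : A ∈ I) (hB : B ∈ I) : A ∪ B ∈ I := by
  have h : (⋃ n : ℕ, if n = 0 then A else B) ∈ I :=
    hI.iUnion_mem _ (by intro n; split <;> assumption)
  apply hI.mem_of_subset _ h
  intro x hx
  rcases hx with h'|h'
  · exact Set.mem_iUnion.2 ⟨0, by simpa using h'⟩
  · exact Set.mem_iUnion.2 ⟨1, by simpa using h'⟩

lemma cof_spec [MeasurableSpace X₀] (Y : Set X₀) (I : Set (Set X₀)) :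
    ∃ 𝓑 : Set (Set X₀), Cardinal.mk ↥𝓑 = Cof Y I ∧ (∀ B ∈ 𝓑, BorelIn Y B ∧ B ∉ I) ∧
      ∀ A : Set X₀, BorelIn Y A → A ∉ I → ∃ B ∈ 𝓑, B ⊆ A :=
  csInf_mem (cof_nonempty Y I)

lemma cof_infinite_of_ne_zero [MeasurableSpace X₀] [MeasurableSingletonClass X₀]
    {Y : Set X₀} {I : Set (Set X₀)} (hI : SigmaIdealOn Y I) (hem : (∅ : Set X₀) ∈ I)
    (h0 : Cof Y I ≠ 0) : ℵ₀ ≤ Cof Y I := by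
  by_contra hlt
  push_neg at hlt
  obtain ⟨𝓑, hmk, h𝓑, hbase⟩ := cof_spec Y I
  have hfin : 𝓑.Finite := Cardinal.lt_aleph0_iff_set_finite.1 (by rw [hmk]; exact hlt)
  have hne : 𝓑.Nonempty := by
    rw [Set.nonempty_iff_ne_empty]
    intro h
    apply h0
    rw [← hmk, h, Cardinal.mk_emptyCollection]
  obtain ⟨B, hB, hmin⟩ := Set.Finite.exists_minimal hfin hne
  obtain ⟨⟨C, hC, hBeq⟩, hBI⟩ := h𝓑 B hB
  have hBne : B.Nonempty := by
    rw [Set.nonempty_iff_ne_empty]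
    rintro rfl
    exact hBI hem
  obtain ⟨b, hb⟩ := hBne
  have hbY : b ∈ Y := by rw [hBeq] at hb; exact hb.2
  have hB'bor : BorelIn Y (B \ {b}) :=
    ⟨C \ {b}, hC.diff (measurableSet_singleton b), by rw [hBeq]; ext x; simp; tauto⟩
  have hB'I : B \ {b} ∉ I := by
    intro h'
    apply hBI
    apply hI.mem_of_subset _ (sigmaIdeal_union hI h' (hI.singleton_mem b hbY))
    intro x hx
    by_cases hxb : x = b
    · exact Or.inr (by simp [hxb])
    · exact Or.inl ⟨hx, hxb⟩
  obtain ⟨B', hB', hB'sub⟩ := hbase _ hB'bor hB'I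
  have : B = B' := le_antisymm (hmin hB' (hB'sub.trans Set.diff_subset)) (hB'sub.trans Set.diff_subset)
  rw [this] at hb
  exact (hB'sub hb).2 rfl

lemma covpair_noncover [MeasurableSpace X₀] {S : Set X₀} {F : Set (↥S → X₀)}
    {𝕀 : (↥S → X₀) → Set (Set X₀)} {f : ↥S → X₀} (hf : f ∈ F) {B : Set X₀}
    (hBor : BorelIn (Set.range f) B) (hBI : B ∉ 𝕀 f) {Z : Set X₀} {F₀ : Set (↥S → X₀)}
    (hF₀ : F₀ ⊆ F) (hcard : Cardinal.mk ↥F₀ ≤ Cardinal.mk ↥Z)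
    (hZ : Cardinal.mk ↥Z < CovPair F 𝕀) :
    ∃ x : ↥S, x ∈ f ⁻¹' B ∧ ∀ h ∈ F₀, h x ∉ Z := by
  by_contra hc
  push_neg at hc
  have hsub : f ⁻¹' B ⊆ ⋃ h ∈ F₀, h ⁻¹' Z := by
    intro x hx
    obtain ⟨h, hh, hz⟩ := hc x hx
    exact Set.mem_biUnion hh hz
  have hmem : Cardinal.mk ↥Z ∈ { c | ∃ Z : Set X₀, Cardinal.mk ↥Z = c ∧ ∃ f ∈ F, ∃ B : Set X₀,
      BorelIn (Set.range f) B ∧ B ∉ 𝕀 f ∧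
      ∃ F₀ ⊆ F, Cardinal.mk ↥F₀ ≤ Cardinal.mk ↥Z ∧ f ⁻¹' B ⊆ ⋃ h ∈ F₀, h ⁻¹' Z } :=
    ⟨Z, rfl, f, hf, B, hBor, hBI, F₀, hF₀, hcard, hsub⟩
  exact absurd (csInf_le' hmem) (not_le.2 hZ)

end Stmt4Aux

open Stmt4Aux in
theorem stmt4 {X₀ : Type} [TopologicalSpace X₀] [PolishSpace X₀]
    [MeasurableSpace X₀] [BorelSpace X₀]
    (S : Set X₀) [PolishSpace ↥S]
    (F : Set (↥S → X₀)) (𝕀 : (↥S → X₀) → Set (Set X₀))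
    (hfine : FinePair S F 𝕀)
    (h1 : Cardinal.mk ↥F ≤ ⨆ f : ↥F, Cof (Set.range (f : ↥S → X₀)) (𝕀 f))
    (h2 : (⨆ f : ↥F, Cof (Set.range (f : ↥S → X₀)) (𝕀 f)) ≤ CovPair F 𝕀) :
    ∃ A : Set ↥S, ∀ f ∈ F, CompletelyNonmeasurable (Set.range f) (𝕀 f) (f '' A) := by
  classical
  by_cases hEmp : ∀ f ∈ F, (∅ : Set X₀) ∈ 𝕀 f
  swap
  · push_neg at hEmp
    obtain ⟨f, hf, hfI⟩ := hEmp
    exfalso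
    have hmem : (0 : Cardinal) ∈ { c | ∃ Z : Set X₀, Cardinal.mk ↥Z = c ∧ ∃ f ∈ F, ∃ B : Set X₀,
        BorelIn (Set.range f) B ∧ B ∉ 𝕀 f ∧
        ∃ F₀ ⊆ F, Cardinal.mk ↥F₀ ≤ Cardinal.mk ↥Z ∧ f ⁻¹' B ⊆ ⋃ h ∈ F₀, h ⁻¹' Z } :=
      ⟨∅, by simp, f, hf, ∅, ⟨∅, MeasurableSet.empty, by simp⟩, hfI, ∅, Set.empty_subset F,
        by simp, by simp⟩
    have hcov0 : CovPair F 𝕀 ≤ 0 := csInf_le' hmem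
    have hF0 : Cardinal.mk ↥F = 0 :=
      le_antisymm ((h1.trans h2).trans hcov0) zero_le
    exact (Cardinal.mk_eq_zero_iff.1 hF0).elim' ⟨f, hf⟩
  -- choose cofinal bases
  have hcof : ∀ f : ↥F, ∃ 𝓑 : Set (Set X₀),
      Cardinal.mk ↥𝓑 = Cof (Set.range (f : ↥S → X₀)) (𝕀 f) ∧
      (∀ B ∈ 𝓑, BorelIn (Set.range (f : ↥S → X₀)) B ∧ B ∉ 𝕀 f) ∧
      (∀ A : Set X₀, BorelIn (Set.range (f : ↥S → X₀)) A → A ∉ 𝕀 f → ∃ B ∈ 𝓑, B ⊆ A) :=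
    fun f => csInf_mem (cof_nonempty _ _)
  choose 𝓑 h𝓑card h𝓑mem h𝓑base using hcof
  by_cases hκinf : ℵ₀ ≤ ⨆ f : ↥F, Cof (Set.range (f : ↥S → X₀)) (𝕀 f)
  swap
  · refine ⟨∅, ?_⟩
    intro f hf B hBor hBI
    obtain ⟨B', hB', _⟩ := h𝓑base ⟨f, hf⟩ B hBor hBI
    have h0 : Cardinal.mk ↥(𝓑 ⟨f, hf⟩) = 0 := by
      rw [h𝓑card]
      by_contra h0
      exact hκinf ((cof_infinite_of_ne_zero (hfine f hf).2.1 (hEmp f hf) h0).trans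
        (le_ciSup (Cardinal.bddAbove_range _) (⟨f, hf⟩ : ↥F)))
    exact ((Cardinal.mk_eq_zero_iff.1 h0).elim' ⟨B', hB'⟩)
  -- main construction
  have hCovInf : ℵ₀ ≤ CovPair F 𝕀 := hκinf.trans h2
  set P := (f : ↥F) × ↥(𝓑 f) with hP
  have hlam : Cardinal.mk P ≤ CovPair F 𝕀 := by
    have e1 : Cardinal.mk P = Cardinal.sum (fun f : ↥F => Cardinal.mk ↥(𝓑 f)) :=
      Cardinal.mk_sigma _
    have e2 : Cardinal.sum (fun f : ↥F => Cardinal.mk ↥(𝓑 f)) ≤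
        Cardinal.sum (fun _ : ↥F => ⨆ f : ↥F, Cof (Set.range (f : ↥S → X₀)) (𝕀 f)) := by
      apply Cardinal.sum_le_sum
      intro f
      rw [h𝓑card f]
      exact le_ciSup (Cardinal.bddAbove_range _) f
    rw [Cardinal.sum_const'] at e2
    calc Cardinal.mk P = _ := e1
      _ ≤ Cardinal.mk ↥F * (⨆ f : ↥F, Cof (Set.range (f : ↥S → X₀)) (𝕀 f)) := e2
      _ ≤ (⨆ f : ↥F, Cof (Set.range (f : ↥S → X₀)) (𝕀 f)) *
          (⨆ f : ↥F, Cof (Set.range (f : ↥S → X₀)) (𝕀 f)) := mul_le_mul' h1 le_rfl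
      _ = _ := Cardinal.mul_eq_self hκinf
      _ ≤ CovPair F 𝕀 := h2
  obtain ⟨r, wo, hord⟩ := Cardinal.ord_eq P
  haveI := wo
  have wf : WellFounded r := IsWellFounded.wf
  have hpred : ∀ p : P, Cardinal.mk {q // r q p} < CovPair F 𝕀 := by
    intro p
    have h1' := Ordinal.typein_lt_type r p
    rw [← hord] at h1'
    have := Cardinal.lt_ord.1 h1'
    change Cardinal.mk {q // r q p} < _ at this
    exact this.trans_le hlam
  have hpred1 : ∀ p : P, Cardinal.mk {q // r q p} + 1 < CovPair F 𝕀 := fun p =>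
    Cardinal.add_lt_of_lt hCovInf (hpred p) (Cardinal.one_lt_aleph0.trans_le hCovInf)
  -- existence of the pair of points at each stage
  have ex : ∀ (p : P) (prev : ∀ q, r q p → ↥S × ↥S), ∃ xy : ↥S × ↥S,
      xy.1 ∈ (p.1 : ↥S → X₀) ⁻¹' (p.2 : Set X₀) ∧
      xy.2 ∈ (p.1 : ↥S → X₀) ⁻¹' (p.2 : Set X₀) ∧
      (∀ q (h : r q p), (q.1 : ↥S → X₀) xy.1 ≠ (q.1 : ↥S → X₀) (prev q h).2) ∧
      (p.1 : ↥S → X₀) xy.2 ≠ (p.1 : ↥S → X₀) xy.1 ∧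
      (∀ q (h : r q p), (p.1 : ↥S → X₀) xy.2 ≠ (p.1 : ↥S → X₀) (prev q h).1) := by
    intro p prev
    obtain ⟨hBor, hBI⟩ := h𝓑mem p.1 _ p.2.2
    have hfp : (p.1 : ↥S → X₀) ∈ F := p.1.2
    have hBne : (p.2 : Set X₀).Nonempty := by
      rw [Set.nonempty_iff_ne_empty]
      rintro h
      exact hBI (h ▸ hEmp _ hfp)
    have hX₀ : Nonempty X₀ := ⟨hBne.choose⟩
    have hCovX₀ : CovPair F 𝕀 ≤ Cardinal.mk X₀ := by
      have hmem : Cardinal.mk ↥(Set.univ : Set X₀) ∈ { c | ∃ Z : Set X₀,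
          Cardinal.mk ↥Z = c ∧ ∃ f ∈ F, ∃ B : Set X₀,
          BorelIn (Set.range f) B ∧ B ∉ 𝕀 f ∧
          ∃ F₀ ⊆ F, Cardinal.mk ↥F₀ ≤ Cardinal.mk ↥Z ∧ f ⁻¹' B ⊆ ⋃ h ∈ F₀, h ⁻¹' Z } := by
        refine ⟨Set.univ, rfl, (p.1 : ↥S → X₀), hfp, (p.2 : Set X₀), hBor, hBI,
          {(p.1 : ↥S → X₀)}, Set.singleton_subset_iff.2 hfp, ?_, ?_⟩
        · rw [Cardinal.mk_singleton, Cardinal.mk_univ]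
          exact Cardinal.one_le_iff_ne_zero.2 (Cardinal.mk_ne_zero_iff.2 hX₀)
        · intro x _
          exact Set.mem_biUnion rfl (Set.mem_univ _)
      exact (csInf_le' hmem).trans_eq Cardinal.mk_univ
    obtain ⟨W, hW⟩ := Cardinal.le_mk_iff_exists_set.1 ((hpred1 p).le.trans hCovX₀)
    set Zx : Set X₀ :=
      Set.range (fun q : {q // r q p} => (q.1.1 : ↥S → X₀) (prev q.1 q.2).2) ∪ W with hZx
    set F₀x : Set (↥S → X₀) :=
      insert (p.1 : ↥S → X₀) (Set.range (fun q : {q // r q p} => (q.1.1 : ↥S → X₀))) with hF₀x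
    have hF₀sub : F₀x ⊆ F := by
      rintro h (rfl | ⟨q, rfl⟩)
      · exact hfp
      · exact q.1.1.2
    have hrange1 : Cardinal.mk ↥(Set.range (fun q : {q // r q p} =>
        (q.1.1 : ↥S → X₀) (prev q.1 q.2).2)) ≤ Cardinal.mk {q // r q p} :=
      Cardinal.mk_range_le
    have hrange2 : Cardinal.mk ↥(Set.range (fun q : {q // r q p} =>
        (q.1.1 : ↥S → X₀))) ≤ Cardinal.mk {q // r q p} := Cardinal.mk_range_le
    have hF₀card : Cardinal.mk ↥F₀x ≤ Cardinal.mk ↥Zx := by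
      calc Cardinal.mk ↥F₀x ≤ _ + 1 := Cardinal.mk_insert_le
        _ ≤ Cardinal.mk {q // r q p} + 1 := add_le_add_left hrange2 1
        _ = Cardinal.mk ↥W := hW.symm
        _ ≤ Cardinal.mk ↥Zx := Cardinal.mk_le_mk_of_subset Set.subset_union_right
    have hZxcard : Cardinal.mk ↥Zx < CovPair F 𝕀 := by
      calc Cardinal.mk ↥Zx ≤ _ + _ := Cardinal.mk_union_le _ _
        _ ≤ Cardinal.mk {q // r q p} + (Cardinal.mk {q // r q p} + 1) := by
            rw [hW]; exact add_le_add_left hrange1 _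
        _ < CovPair F 𝕀 := Cardinal.add_lt_of_lt hCovInf (hpred p) (hpred1 p)
    obtain ⟨x, hxB, hxavoid⟩ := covpair_noncover hfp hBor hBI hF₀sub hF₀card hZxcard
    set Zy : Set X₀ := insert ((p.1 : ↥S → X₀) x)
      (Set.range (fun q : {q // r q p} => (p.1 : ↥S → X₀) (prev q.1 q.2).1)) with hZy
    have hZycard : Cardinal.mk ↥Zy < CovPair F 𝕀 := by
      calc Cardinal.mk ↥Zy ≤ _ + 1 := Cardinal.mk_insert_le
        _ ≤ Cardinal.mk {q // r q p} + 1 := add_le_add_left Cardinal.mk_range_le 1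
        _ < CovPair F 𝕀 := hpred1 p
    have hZyne : Cardinal.mk ↥({(p.1 : ↥S → X₀)} : Set (↥S → X₀)) ≤ Cardinal.mk ↥Zy := by
      rw [Cardinal.mk_singleton]
      exact Cardinal.one_le_iff_ne_zero.2 (Cardinal.mk_ne_zero_iff.2
        ⟨⟨_, Set.mem_insert _ _⟩⟩)
    obtain ⟨y, hyB, hyavoid⟩ := covpair_noncover hfp hBor hBI
      (Set.singleton_subset_iff.2 hfp) hZyne hZycard
    refine ⟨(x, y), hxB, hyB, ?_, ?_, ?_⟩
    · intro q h heq
      apply hxavoid (q.1 : ↥S → X₀) (Set.mem_insert_of_mem _ ⟨⟨q, h⟩, rfl⟩)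
      exact Set.mem_union_left _ ⟨⟨q, h⟩, heq.symm⟩
    · intro heq
      exact hyavoid _ rfl (heq ▸ Set.mem_insert _ _)
    · intro q h heq
      exact hyavoid _ rfl (heq ▸ Set.mem_insert_of_mem _ ⟨⟨q, h⟩, rfl⟩)
  set g : P → ↥S × ↥S := wf.fix (fun p ih => Classical.choose (ex p ih)) with hgdef
  have hg : ∀ p : P,
      (g p).1 ∈ (p.1 : ↥S → X₀) ⁻¹' (p.2 : Set X₀) ∧
      (g p).2 ∈ (p.1 : ↥S → X₀) ⁻¹' (p.2 : Set X₀) ∧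
      (∀ q (h : r q p), (q.1 : ↥S → X₀) (g p).1 ≠ (q.1 : ↥S → X₀) (g q).2) ∧
      (p.1 : ↥S → X₀) (g p).2 ≠ (p.1 : ↥S → X₀) (g p).1 ∧
      (∀ q (h : r q p), (p.1 : ↥S → X₀) (g p).2 ≠ (p.1 : ↥S → X₀) (g q).1) := by
    intro p
    have hfix : g p = Classical.choose (ex p (fun q _ => g q)) := by
      rw [hgdef]
      exact wf.fix_eq _ p
    rw [hfix]
    exact Classical.choose_spec (ex p (fun q _ => g q))
  refine ⟨Set.range (fun p => (g p).1), ?_⟩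
  intro f hf B hBor hBI
  obtain ⟨B₀, hB₀mem, hB₀sub⟩ := h𝓑base ⟨f, hf⟩ B hBor hBI
  set p : P := ⟨⟨f, hf⟩, ⟨B₀, hB₀mem⟩⟩ with hpdef
  obtain ⟨hx, hy, hX2, hY2a, hY2b⟩ := hg p
  constructor
  · exact ⟨f (g p).1, ⟨(g p).1, ⟨p, rfl⟩, rfl⟩, hB₀sub hx⟩
  · refine ⟨f (g p).2, hB₀sub hy, ?_⟩
    rintro ⟨s, ⟨q, rfl⟩, heq⟩
    rcases trichotomous_of r q p with hqp | rfl | hpq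
    · exact hY2b q hqp heq.symm
    · exact hY2a heq.symm
    · exact (hg q).2.2.1 p hpq heq
end

section
/- There exists a set A contained in the unit circle S¹ = {(x,y) ∈ ℝ² : x² + y² = 1} such that for every angle α ∈ [0, π) the orthogonal projection π_α[A] = {x·cos α + y·sin α : (x,y) ∈ A} is a Bernstein set in the interval [-1, 1] = π_α[S¹]. -/
/-- `A` is a Bernstein set in the subspace `Y` (with the subspace topology). -/
def IsBernsteinIn {X : Type*} [TopologicalSpace X] (Y A : Set X) : Prop :=
  IsBernstein {y : Y | (y : X) ∈ A}

/-- The signed orthogonal projection onto the line through the origin in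
direction `(cos α, sin α)`. -/
noncomputable def proj (α : ℝ) (p : ℝ × ℝ) : ℝ :=
  p.1 * Real.cos α + p.2 * Real.sin α

open Set Cardinal

namespace Stmt6

noncomputable section

/-- The unit circle. -/
def Circ : Set (ℝ × ℝ) := {p | p.1 ^ 2 + p.2 ^ 2 = 1}

/-- The fiber of the projection `proj α`, restricted to the circle, over `s`. -/
def Fib (α s : ℝ) : Set (ℝ × ℝ) := {p | p ∈ Circ ∧ proj α p = s}

/-- A selection of a point in the circle projecting to `t` under `proj α`. -/
def phi (α t : ℝ) : ℝ × ℝ :=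
  (t * Real.cos α - Real.sqrt (1 - t ^ 2) * Real.sin α,
   t * Real.sin α + Real.sqrt (1 - t ^ 2) * Real.cos α)

lemma proj_phi (α t : ℝ) : proj α (phi α t) = t := by
  have h := Real.sin_sq_add_cos_sq α
  simp only [proj, phi]
  linear_combination t * h

lemma phi_mem_circ {t : ℝ} (α : ℝ) (ht : t ∈ Icc (-1:ℝ) 1) : phi α t ∈ Circ := by
  have h := Real.sin_sq_add_cos_sq α
  have hr : Real.sqrt (1 - t ^ 2) ^ 2 = 1 - t ^ 2 :=
    Real.sq_sqrt (by nlinarith [ht.1, ht.2])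
  simp only [phi, Circ, mem_setOf_eq]
  nlinarith [h, hr]

lemma fib_finite (α s : ℝ) : (Fib α s).Finite := by
  set c := Real.cos α with hc
  set sn := Real.sin α with hsn
  set r := Real.sqrt (1 - s ^ 2) with hrdef
  apply Set.Finite.subset
    ((Set.finite_singleton (s*c + r*sn, s*sn - r*c)).insert (s*c - r*sn, s*sn + r*c))
  rintro ⟨p1, p2⟩ ⟨hcirc, hp⟩
  have hpyth : sn ^ 2 + c ^ 2 = 1 := Real.sin_sq_add_cos_sq α
  have hcirc' : p1 ^ 2 + p2 ^ 2 = 1 := hcirc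
  have hp' : p1 * c + p2 * sn = s := hp
  set u := -p1 * sn + p2 * c with hu
  have h1 : p1 = s * c - u * sn := by
    linear_combination c * hp' + sn * hu - p1 * hpyth
  have h2 : p2 = s * sn + u * c := by
    linear_combination sn * hp' - c * hu - p2 * hpyth
  have h3 : u ^ 2 = 1 - s ^ 2 := by
    linear_combination (u + (-p1 * sn + p2 * c)) * hu - (p1 * c + p2 * sn + s) * hp' +
      (p1 ^ 2 + p2 ^ 2) * hpyth + hcirc'
  have hr2 : r ^ 2 = 1 - s ^ 2 := Real.sq_sqrt (by nlinarith [sq_nonneg u])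
  have : u = r ∨ u = -r := by
    rcases mul_self_eq_mul_self_iff.mp (by nlinarith : u * u = r * r) with h | h
    · exact Or.inl h
    · exact Or.inr h
  simp only [mem_insert_iff, mem_singleton_iff, Prod.ext_iff]
  rcases this with h | h
  · exact Or.inl ⟨by rw [h1, h], by rw [h2, h]⟩
  · exact Or.inr ⟨by rw [h1, h]; ring, by rw [h2, h]; ring⟩

/-- The property of the data chosen at each step of the recursion: a point `x.1`
on the circle projecting into `Q`, avoiding the blocked set `B` and the fiber over
the chosen excluded value `x.2 ∈ Q`, whose fiber avoids all previously chosen points. -/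
def GoodStep (α : ℝ) (Q : Set ℝ) (Ap B : Set (ℝ × ℝ)) (x : (ℝ × ℝ) × ℝ) : Prop :=
  x.2 ∈ Q ∧ x.1 ∈ Circ ∧ proj α x.1 ∈ Q ∧ x.1 ∉ B ∧ x.1 ∉ Fib α x.2 ∧ Fib α x.2 ∩ Ap = ∅

lemma step_exists (α : ℝ) (Q : Set ℝ) (hQc : 𝔠 ≤ #Q) (hQI : Q ⊆ Icc (-1:ℝ) 1)
    (Ap : Set (ℝ × ℝ)) (hA : #Ap < 𝔠) (B : Set (ℝ × ℝ)) (hB : #B < 𝔠) :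
    ∃ x, GoodStep α Q Ap B x := by
  have h1 : ¬ Q ⊆ proj α '' Ap := by
    intro hsub
    have h2 : #Q ≤ #(proj α '' Ap) := mk_le_mk_of_subset hsub
    have h3 : #(proj α '' Ap) ≤ #Ap := mk_image_le
    exact absurd (hQc.trans (h2.trans h3)) (not_le.mpr hA)
  obtain ⟨s, hsQ, hs⟩ := not_subset.mp h1
  have hfib : Fib α s ∩ Ap = ∅ := by
    ext p
    simp only [mem_inter_iff, mem_empty_iff_false, iff_false, not_and]
    rintro ⟨-, hps⟩ hpA
    exact hs ⟨p, hpA, hps⟩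
  have hBc' : #(B ∪ Fib α s : Set (ℝ × ℝ)) < 𝔠 := by
    apply lt_of_le_of_lt (mk_union_le _ _)
    exact add_lt_of_lt aleph0_le_continuum hB
      ((fib_finite α s).lt_aleph0.trans aleph0_lt_continuum)
  have h2 : ¬ ∀ t ∈ Q, phi α t ∈ B ∪ Fib α s := by
    intro hall
    have hle : #Q ≤ #(B ∪ Fib α s : Set (ℝ × ℝ)) := by
      apply mk_le_of_injective
        (f := fun t : Q => (⟨phi α t, hall t t.2⟩ : (B ∪ Fib α s : Set (ℝ × ℝ))))
      intro t1 t2 hh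
      have h3 : phi α (t1 : ℝ) = phi α (t2 : ℝ) := congrArg Subtype.val hh
      have h4 := congrArg (proj α) h3
      rw [proj_phi, proj_phi] at h4
      exact Subtype.ext h4
    exact absurd (hQc.trans hle) (not_le.mpr hBc')
  push_neg at h2
  obtain ⟨t, htQ, htB⟩ := h2
  exact ⟨(phi α t, s), hsQ, phi_mem_circ α (hQI htQ),
    by rw [proj_phi]; exact htQ,
    fun hmem => htB (Or.inl hmem), fun hmem => htB (Or.inr hmem), hfib⟩

/-- In a second countable space there are at most continuum many closed sets. -/
lemma card_closeds (X : Type) [TopologicalSpace X]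
    [SecondCountableTopology X] :
    #{C : Set X // IsClosed C} ≤ 𝔠 := by
  obtain ⟨b, hbc, -, hbasis⟩ := TopologicalSpace.exists_countable_basis X
  have hinj : Function.Injective
      (fun C : {C : Set X // IsClosed C} => {s : b | (s : Set X) ⊆ (↑C : Set X)ᶜ}) := by
    intro C D h
    have key : ∀ u : Set X, u ∈ b → ((u ⊆ (↑C : Set X)ᶜ) ↔ (u ⊆ (↑D : Set X)ᶜ)) := by
      intro u hu
      have := Set.ext_iff.mp h ⟨u, hu⟩
      simpa using this
    have hC := hbasis.open_eq_sUnion' C.2.isOpen_compl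
    have hD := hbasis.open_eq_sUnion' D.2.isOpen_compl
    have hsets : {s | s ∈ b ∧ s ⊆ (↑C : Set X)ᶜ} = {s | s ∈ b ∧ s ⊆ (↑D : Set X)ᶜ} := by
      ext u
      exact and_congr_right fun hu => key u hu
    apply Subtype.ext
    rw [← compl_compl (↑C : Set X), ← compl_compl (↑D : Set X), hC, hD]
    rw [show {s | s ∈ b ∧ s ⊆ (↑C : Set X)ᶜ} = {s | s ∈ b ∧ s ⊆ (↑D : Set X)ᶜ} from hsets]
  calc #{C : Set X // IsClosed C} ≤ #(Set b) := mk_le_of_injective hinj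
    _ = 2 ^ #b := mk_set
    _ ≤ 2 ^ ℵ₀ := by
        apply power_le_power_left two_ne_zero
        exact mk_le_aleph0_iff.mpr hbc.to_subtype
    _ = 𝔠 := two_power_aleph0

/-- A nonempty perfect subset of `[-1,1]` has at least continuum many points. -/
lemma perfect_card {P : Set ↥(Icc (-1:ℝ) 1)} (h : PerfectSet P) :
    𝔠 ≤ #(Subtype.val '' P : Set ℝ) := by
  haveI : CompleteSpace ↥(Icc (-1:ℝ) 1) :=
    (IsClosed.isComplete isClosed_Icc).completeSpace_coe
  obtain ⟨f, hrange, -, hinj⟩ := h.1.exists_nat_bool_injection h.2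
  have hle : #(ℕ → Bool) ≤ #(Subtype.val '' P : Set ℝ) := by
    apply mk_le_of_injective
      (f := fun x : ℕ → Bool =>
        (⟨(f x : ℝ), ⟨f x, hrange (mem_range_self x), rfl⟩⟩ : (Subtype.val '' P : Set ℝ)))
    intro x y hxy
    exact hinj (Subtype.ext (Subtype.mk_eq_mk.mp hxy))
  have hcard : #(ℕ → Bool) = 𝔠 := by
    rw [mk_arrow]
    simp [two_power_aleph0]
  rwa [hcard] at hle

lemma val_image_subset {P : Set ↥(Icc (-1:ℝ) 1)} :
    (Subtype.val '' P : Set ℝ) ⊆ Icc (-1:ℝ) 1 := by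
  rintro x ⟨y, -, rfl⟩
  exact y.2

/-- The type of requirements: an angle together with a perfect subset of `[-1,1]`. -/
def T : Type := ℝ × {P : Set ↥(Icc (-1:ℝ) 1) // PerfectSet P}

lemma card_T : #T ≤ 𝔠 := by
  have h1 : #{P : Set ↥(Icc (-1:ℝ) 1) // PerfectSet P} ≤ 𝔠 := by
    have hi : Function.Injective
        (fun P : {P : Set ↥(Icc (-1:ℝ) 1) // PerfectSet P} =>
          (⟨P.1, P.2.1.closed⟩ : {C : Set ↥(Icc (-1:ℝ) 1) // IsClosed C})) := by
      intro P Q h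
      exact Subtype.ext (Subtype.mk_eq_mk.mp h)
    exact (mk_le_of_injective hi).trans (card_closeds _)
  have h2 : #T = #ℝ * #{P : Set ↥(Icc (-1:ℝ) 1) // PerfectSet P} := by
    rw [T, mk_prod, lift_uzero, lift_uzero]
  rw [h2, ← mul_eq_self aleph0_le_continuum]
  exact mul_le_mul' mk_real.le h1

/-- The index type for the recursion: a well-order of size continuum all whose
initial segments are smaller than continuum. -/
abbrev I : Type := (Cardinal.continuum : Cardinal.{0}).ord.ToType

/-- An injective enumeration of the requirements. -/
def e : T ↪ I :=
  ((Cardinal.le_def T I).mp (by rw [mk_ord_toType]; exact card_T)).some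

open Classical in
/-- The requirement (if any) handled at stage `ξ`. -/
def req (ξ : I) : Option T := if h : ∃ t : T, e t = ξ then some h.choose else none

lemma req_e (t : T) : req (e t) = some t := by
  rw [req, dif_pos ⟨t, rfl⟩]
  exact congrArg some (e.injective (⟨t, rfl⟩ : ∃ t' : T, e t' = e t).choose_spec)

/-- The point chosen at a stage. -/
def pt (v : Option ((ℝ × ℝ) × ℝ × ℝ)) : ℝ × ℝ := v.elim (0, 0) Prod.fst

/-- The fiber blocked at a stage. -/
def fb (v : Option ((ℝ × ℝ) × ℝ × ℝ)) : Set (ℝ × ℝ) := v.elim ∅ fun x => Fib x.2.1 x.2.2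

lemma fb_finite (v : Option ((ℝ × ℝ) × ℝ × ℝ)) : (fb v).Finite := by
  cases v with
  | none => exact Set.finite_empty
  | some x => exact fib_finite x.2.1 x.2.2

/-- Points chosen before stage `ξ`. -/
def APrev (ξ : I) (g : ∀ η : I, η < ξ → Option ((ℝ × ℝ) × ℝ × ℝ)) : Set (ℝ × ℝ) :=
  Set.range fun η : ↥(Iio ξ) => pt (g η η.2)

/-- Fibers blocked before stage `ξ`. -/
def Bl (ξ : I) (g : ∀ η : I, η < ξ → Option ((ℝ × ℝ) × ℝ × ℝ)) : Set (ℝ × ℝ) :=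
  ⋃ η : ↥(Iio ξ), fb (g η η.2)

lemma card_APrev (ξ : I) (g : ∀ η : I, η < ξ → Option ((ℝ × ℝ) × ℝ × ℝ)) :
    #(APrev ξ g) < 𝔠 :=
  mk_range_le.trans_lt (mk_Iio_ord_toType ξ)

lemma card_Bl (ξ : I) (g : ∀ η : I, η < ξ → Option ((ℝ × ℝ) × ℝ × ℝ)) :
    #(Bl ξ g) < 𝔠 := by
  apply lt_of_le_of_lt (mk_iUnion_le_sum_mk)
  have h1 : (Cardinal.sum fun η : ↥(Iio ξ) => #(fb (g η η.2))) ≤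
      Cardinal.sum fun _ : ↥(Iio ξ) => ℵ₀ :=
    Cardinal.sum_le_sum _ _ fun η => (fb_finite _).lt_aleph0.le
  apply lt_of_le_of_lt h1
  rw [Cardinal.sum_const']
  exact mul_lt_of_lt aleph0_le_continuum (mk_Iio_ord_toType ξ) aleph0_lt_continuum

lemma key (ξ : I) (g : ∀ η : I, η < ξ → Option ((ℝ × ℝ) × ℝ × ℝ)) (t : T) :
    ∃ x : (ℝ × ℝ) × ℝ,
      GoodStep t.1 (Subtype.val '' (t.2.1 : Set ↥(Icc (-1:ℝ) 1))) (APrev ξ g) (Bl ξ g) x :=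
  step_exists t.1 _ (perfect_card t.2.2) val_image_subset _ (card_APrev ξ g) _ (card_Bl ξ g)

/-- One step of the transfinite recursion. -/
def F (ξ : I) (g : ∀ η : I, η < ξ → Option ((ℝ × ℝ) × ℝ × ℝ)) : Option ((ℝ × ℝ) × ℝ × ℝ) :=
  (req ξ).map fun t => ((key ξ g t).choose.1, t.1, (key ξ g t).choose.2)

/-- The transfinite recursion. -/
def h : I → Option ((ℝ × ℝ) × ℝ × ℝ) := IsWellFounded.fix (· < ·) F

lemma h_eq (ξ : I) : h ξ = F ξ fun η _ => h η := IsWellFounded.fix_eq (· < ·) F ξ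

lemma spec1 {ξ : I} {t : T} (ht : req ξ = some t) :
    ∃ x : (ℝ × ℝ) × ℝ,
      h ξ = some (x.1, t.1, x.2) ∧
      GoodStep t.1 (Subtype.val '' (t.2.1 : Set ↥(Icc (-1:ℝ) 1)))
        (APrev ξ fun η _ => h η) (Bl ξ fun η _ => h η) x := by
  have heq := h_eq ξ
  rw [F, ht, Option.map_some] at heq
  exact ⟨(key ξ (fun η _ => h η) t).choose, heq, (key ξ (fun η _ => h η) t).choose_spec⟩

lemma spec2 {ξ : I} {a : ℝ × ℝ} {α s : ℝ} (hξ : h ξ = some (a, α, s)) :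
    ∃ t : T, req ξ = some t ∧ t.1 = α ∧
      GoodStep α (Subtype.val '' (t.2.1 : Set ↥(Icc (-1:ℝ) 1)))
        (APrev ξ fun η _ => h η) (Bl ξ fun η _ => h η) (a, s) := by
  cases hr : req ξ with
  | none =>
    rw [h_eq ξ, F, hr, Option.map_none] at hξ
    exact absurd hξ (by simp)
  | some t =>
    obtain ⟨x, hx, good⟩ := spec1 hr
    have heq : (a, α, s) = (x.1, t.1, x.2) := Option.some.inj (hξ.symm.trans hx)
    have h1 : a = x.1 := congrArg Prod.fst heq
    have h2 : α = t.1 := congrArg (fun z : (ℝ × ℝ) × ℝ × ℝ => z.2.1) heq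
    have h3 : s = x.2 := congrArg (fun z : (ℝ × ℝ) × ℝ × ℝ => z.2.2) heq
    refine ⟨t, rfl, h2.symm, ?_⟩
    rw [h1, h3, h2, Prod.mk.eta]
    exact good

/-- The Bernstein-like set on the circle. -/
def A : Set (ℝ × ℝ) := {p | ∃ ξ : I, ∃ α s : ℝ, h ξ = some (p, α, s)}

lemma A_subset_circ : A ⊆ Circ := by
  rintro p ⟨ξ, α, s, hξ⟩
  obtain ⟨t, -, -, good⟩ := spec2 hξ
  exact good.2.1

end

end Stmt6

theorem stmt6 :
    ∃ A : Set (ℝ × ℝ), A ⊆ {p : ℝ × ℝ | p.1 ^ 2 + p.2 ^ 2 = 1} ∧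
      ∀ α ∈ Set.Ico (0 : ℝ) Real.pi,
        IsBernsteinIn (Set.Icc (-1 : ℝ) 1) (proj α '' A) := by
  refine ⟨Stmt6.A, Stmt6.A_subset_circ, ?_⟩
  intro α hα P hP
  set t : Stmt6.T := (α, ⟨P, hP⟩) with htdef
  obtain ⟨x, hx, hsQ, hacirc, haQ, haB, haF, hfib⟩ := Stmt6.spec1 (Stmt6.req_e t)
  have hx1A : x.1 ∈ Stmt6.A := ⟨Stmt6.e t, t.1, x.2, hx⟩
  constructor
  · obtain ⟨y, hyP, hyval⟩ := haQ
    exact ⟨y, ⟨x.1, hx1A, hyval.symm⟩, hyP⟩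
  · obtain ⟨y0, hy0P, hy0val⟩ := hsQ
    refine ⟨y0, hy0P, ?_⟩
    rintro ⟨p, ⟨η, α', s', hη⟩, hpproj⟩
    obtain ⟨t', hrt', ht'1, ⟨-, hpcirc, -, hpB, hpF, -⟩⟩ := Stmt6.spec2 hη
    have hpfib : p ∈ Stmt6.Fib α x.2 := ⟨hpcirc, hpproj.trans hy0val⟩
    rcases lt_trichotomy η (Stmt6.e t) with hlt | heq | hgt
    · have hmem : p ∈ Stmt6.APrev (Stmt6.e t) (fun η' _ => Stmt6.h η') :=
        ⟨⟨η, hlt⟩, by show Stmt6.pt (Stmt6.h η) = p; rw [hη]; rfl⟩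
      have : p ∈ Stmt6.Fib α x.2 ∩ Stmt6.APrev (Stmt6.e t) (fun η' _ => Stmt6.h η') :=
        ⟨hpfib, hmem⟩
      rw [hfib] at this
      exact this
    · subst heq
      have heq2 : (p, α', s') = (x.1, t.1, x.2) := Option.some.inj (hη.symm.trans hx)
      have hp1 : p = x.1 := congrArg Prod.fst heq2
      rw [hp1] at hpfib
      exact haF hpfib
    · apply hpB
      apply Set.mem_iUnion.mpr
      refine ⟨⟨Stmt6.e t, hgt⟩, ?_⟩
      show (p, s').1 ∈ Stmt6.fb (Stmt6.h (Stmt6.e t))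
      rw [hx]
      exact hpfib
end

section
/- There exists a set A contained in the closed unit disc D = {(x,y) ∈ ℝ² : x² + y² ≤ 1} such that A is completely N-nonmeasurable in D (that is, for every Borel set B ⊆ D of positive two-dimensional Lebesgue measure, both A ∩ B and B \ A are nonempty) and, for every angle α ∈ [0, π), the projection π_α[A] = {x·cos α + y·sin α : (x,y) ∈ A} is completely N-nonmeasurable in [-1, 1] (that is, for every Borel set B ⊆ [-1,1] of positive one-dimensional Lebesgue measure, both π_α[A] ∩ B and B \ π_α[A] are nonempty). -/
open MeasureTheory

/-- The closed unit disc in the plane. -/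
def unitDisc : Set (ℝ × ℝ) := {p : ℝ × ℝ | p.1 ^ 2 + p.2 ^ 2 ≤ 1}

open Cardinal Set

/-- generic pick lemma -/
lemma pick_avoid {X : Type*} {S T : Set X} (hS : 𝔠 ≤ #S) (hT : #T < 𝔠) : ∃ p ∈ S, p ∉ T := by
  by_contra h
  push_neg at h
  exact absurd (hS.trans (Cardinal.mk_le_mk_of_subset h)) (not_le.mpr hT)

lemma csmall_union {X : Type*} {T1 T2 : Set X} (h1 : #T1 < 𝔠) (h2 : #T2 < 𝔠) : #(T1 ∪ T2 : Set X) < 𝔠 :=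
  lt_of_le_of_lt (Cardinal.mk_union_le _ _) (Cardinal.add_lt_of_lt Cardinal.aleph0_le_continuum h1 h2)

lemma csmall_insert {X : Type*} {T : Set X} (h : #T < 𝔠) (a : X) : #(insert a T : Set X) < 𝔠 :=
  lt_of_le_of_lt Cardinal.mk_insert_le
    (Cardinal.add_lt_of_lt Cardinal.aleph0_le_continuum h (by exact_mod_cast Cardinal.nat_lt_continuum 1))

lemma card_opt {ι' A : Type} (g : ι' → Option A) : #{a | ∃ i, g i = some a} ≤ #ι' := by
  have h : ∀ a : {a | ∃ i, g i = some a}, ∃ i, g i = some a.1 := fun a => a.2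
  choose f hf using h
  apply Cardinal.mk_le_of_injective (f := f)
  intro a b hab
  apply Subtype.ext
  have h1 := hf a
  rw [hab, hf b] at h1
  exact (Option.some_injective _ h1.symm)

/-- continuum many points in a positive measure set -/
lemma ctm_le_mk {X : Type} [MeasurableSpace X] [StandardBorelSpace X] (μ : Measure X) [NullSingletonClass μ]
    {S : Set X} (hm : MeasurableSet S) (hpos : 0 < μ S) : 𝔠 ≤ #S := by
  have hnc : ¬ S.Countable := fun h => hpos.ne' (h.measure_zero μ)
  haveI := hm.standardBorel
  have hnc' : ¬ Countable ↥S := by rwa [Set.countable_coe_iff]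
  have e := PolishSpace.measurableEquivNatBoolOfNotCountable hnc'
  have : #(ℕ → Bool) ≤ #S := Cardinal.mk_le_of_injective e.symm.injective
  rwa [Cardinal.mk_arrow, Cardinal.mk_bool, Cardinal.mk_nat, Cardinal.lift_id, Cardinal.lift_id,
    Cardinal.two_power_aleph0] at this

instance : NullSingletonClass (volume : Measure (ℝ × ℝ)) := by
  rw [MeasureTheory.Measure.volume_eq_prod]; infer_instance

lemma planePick {B : Set (ℝ × ℝ)} (hBd : B ⊆ unitDisc) (hBm : MeasurableSet B)
    (hBp : 0 < volume B) {L : Set (ℝ × ℝ)} (hL : #L < 𝔠) {E : Set (ℝ × ℝ)} (hE : #E < 𝔠) :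
    ∃ p ∈ B, (∀ l ∈ L, proj l.1 p ≠ l.2) ∧ p ∉ E := by
  set f : ℝ → ENNReal := fun x => volume (Prod.mk x ⁻¹' B) with hf
  have hfm : Measurable f := measurable_measure_prodMk_left hBm
  have hint : 0 < ∫⁻ x, f x := by
    have h1 : (volume : Measure (ℝ × ℝ)) B = ∫⁻ x, f x := by
      rw [MeasureTheory.Measure.volume_eq_prod]; exact Measure.prod_apply hBm
    rwa [h1] at hBp
  set X := {x : ℝ | f x ≠ 0} with hX
  have hXm : MeasurableSet X := (hfm (measurableSet_singleton 0)).compl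
  have hXpos : 0 < volume X := by
    rcases eq_or_ne (volume X) 0 with h | h
    · exfalso
      have : ∫⁻ x, f x = 0 := (lintegral_eq_zero_iff hfm).2 (MeasureTheory.ae_iff.2 h)
      exact hint.ne' this
    · exact pos_iff_ne_zero.2 h
  have hXcard : 𝔠 ≤ #X := ctm_le_mk volume hXm hXpos
  have hBadX : #((fun l : ℝ × ℝ => l.2 * Real.cos l.1) '' {l ∈ L | Real.sin l.1 = 0}) < 𝔠 :=
    lt_of_le_of_lt (Cardinal.mk_image_le.trans
      (Cardinal.mk_le_mk_of_subset (Set.sep_subset _ _))) hL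
  obtain ⟨x, hxX, hxB⟩ := pick_avoid hXcard hBadX
  set S := Prod.mk x ⁻¹' B with hS
  have hSm : MeasurableSet S := hBm.preimage measurable_prodMk_left
  have hSpos : 0 < volume S := pos_iff_ne_zero.2 hxX
  have hScard : 𝔠 ≤ #S := ctm_le_mk volume hSm hSpos
  have hEY : #{y : ℝ | (x, y) ∈ E} ≤ #E := by
    apply Cardinal.mk_le_of_injective (f := fun y : {y : ℝ | (x, y) ∈ E} => (⟨(x, y.1), y.2⟩ : E))
    intro a b hab
    apply Subtype.ext
    have := congrArg (fun q : E => (q : ℝ × ℝ).2) hab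
    simpa using this
  set BadY : Set ℝ := ((fun l : ℝ × ℝ => (l.2 - x * Real.cos l.1) / Real.sin l.1) ''
      {l ∈ L | Real.sin l.1 ≠ 0}) ∪ {y : ℝ | (x, y) ∈ E} with hBadYdef
  have hBadY : #BadY < 𝔠 := by
    apply csmall_union
    · exact lt_of_le_of_lt (Cardinal.mk_image_le.trans
        (Cardinal.mk_le_mk_of_subset (Set.sep_subset _ _))) hL
    · exact hEY.trans_lt hE
  obtain ⟨y, hyS, hyB⟩ := pick_avoid hScard hBadY
  refine ⟨(x, y), hyS, ?_, fun hmem => hyB (Or.inr hmem)⟩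
  intro l hl heq
  have heq' : x * Real.cos l.1 + y * Real.sin l.1 = l.2 := heq
  by_cases hs : Real.sin l.1 = 0
  · apply hxB
    refine ⟨l, ⟨hl, hs⟩, ?_⟩
    have h1 := Real.sin_sq_add_cos_sq l.1
    have hc2 : Real.cos l.1 ^ 2 = 1 := by nlinarith
    show l.2 * Real.cos l.1 = x
    linear_combination (-Real.cos l.1) * heq' + x * hc2 + y * Real.cos l.1 * hs
  · apply hyB
    left
    refine ⟨l, ⟨hl, hs⟩, ?_⟩
    field_simp
    linarith [heq']

lemma chordPick (α : ℝ) {b : ℝ} (hb : b ∈ Set.Ioo (-1 : ℝ) 1)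
    {L : Set (ℝ × ℝ)} (hL : #L < 𝔠) (hbL : ∀ l ∈ L, b ≠ l.2 ∧ b ≠ -l.2)
    {E : Set (ℝ × ℝ)} (hE : #E < 𝔠) :
    ∃ p, p ∈ unitDisc ∧ proj α p = b ∧ (∀ l ∈ L, proj l.1 p ≠ l.2) ∧ p ∉ E := by
  set φ : ℝ → ℝ × ℝ := fun t => (b * Real.cos α - t * Real.sin α, b * Real.sin α + t * Real.cos α)
    with hφ
  have hφinj : Function.Injective φ := by
    intro s t hst
    have h1 := congrArg Prod.fst hst
    have h2 := congrArg Prod.snd hst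
    simp only [hφ] at h1 h2
    have hpy := Real.sin_sq_add_cos_sq α
    have e1 : (s - t) * Real.sin α = 0 := by linarith
    have e2 : (s - t) * Real.cos α = 0 := by linarith
    have : s - t = 0 := by
      linear_combination Real.sin α * e1 + Real.cos α * e2 - (s - t) * hpy
    linarith
  set r := Real.sqrt (1 - b ^ 2) with hr
  have hb2 : b ^ 2 < 1 := by nlinarith [hb.1, hb.2]
  have hrpos : 0 < r := Real.sqrt_pos.2 (by linarith)
  have hr2 : r ^ 2 = 1 - b ^ 2 := Real.sq_sqrt (by linarith)
  have hIcard : 𝔠 ≤ #(Set.Ioo (-r) r) := (Cardinal.mk_Ioo_real (by linarith)).ge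
  set BadT : Set ℝ := ((fun l : ℝ × ℝ => (l.2 - b * Real.cos (l.1 - α)) / Real.sin (l.1 - α)) ''
      {l ∈ L | Real.sin (l.1 - α) ≠ 0}) ∪ {t : ℝ | φ t ∈ E} with hBadTdef
  have hETcard : #{t : ℝ | φ t ∈ E} ≤ #E := by
    apply Cardinal.mk_le_of_injective
      (f := fun t : {t : ℝ | φ t ∈ E} => (⟨φ t.1, t.2⟩ : E))
    intro s t hst
    exact Subtype.ext (hφinj (congrArg Subtype.val hst))
  have hBadT : #BadT < 𝔠 := by
    apply csmall_union
    · exact lt_of_le_of_lt (Cardinal.mk_image_le.trans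
        (Cardinal.mk_le_mk_of_subset (Set.sep_subset _ _))) hL
    · exact hETcard.trans_lt hE
  obtain ⟨t, htI, htB⟩ := pick_avoid hIcard hBadT
  have hproj : ∀ β : ℝ, proj β (φ t) = b * Real.cos (β - α) + t * Real.sin (β - α) := by
    intro β
    simp only [proj, hφ, Real.cos_sub, Real.sin_sub]
    ring
  refine ⟨φ t, ?_, ?_, ?_, fun hmem => htB (Or.inr hmem)⟩
  · show (φ t).1 ^ 2 + (φ t).2 ^ 2 ≤ 1
    simp only [hφ]
    have := Real.sin_sq_add_cos_sq α
    have ht2 : t ^ 2 < r ^ 2 := by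
      rcases htI with ⟨h1, h2⟩
      nlinarith
    nlinarith
  · have := hproj α
    simpa using this
  · intro l hl heq
    rw [hproj l.1] at heq
    by_cases hs : Real.sin (l.1 - α) = 0
    · have h1 := Real.sin_sq_add_cos_sq (l.1 - α)
      have hc2 : Real.cos (l.1 - α) ^ 2 = 1 := by nlinarith
      have hc : Real.cos (l.1 - α) = 1 ∨ Real.cos (l.1 - α) = -1 := by
        have hz : (Real.cos (l.1 - α) - 1) * (Real.cos (l.1 - α) + 1) = 0 := by
          linear_combination hc2
        rcases mul_eq_zero.mp hz with h | h
        · left; linarith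
        · right; linarith
      obtain ⟨hb1, hb2⟩ := hbL l hl
      rcases hc with h | h <;> rw [h, hs] at heq <;> simp at heq
      · exact hb1 (by linarith)
      · exact hb2 (by linarith)
    · apply htB
      left
      refine ⟨l, ⟨hl, hs⟩, ?_⟩
      field_simp
      linarith [heq]

lemma card_measurableSets (γ : Type) [m : MeasurableSpace γ] [MeasurableSpace.CountablyGenerated γ] :
    #{s : Set γ | MeasurableSet s} ≤ 𝔠 := by
  obtain ⟨b, hbc, hb⟩ := MeasurableSpace.CountablyGenerated.isCountablyGenerated (α := γ)
  have hble : #b ≤ 𝔠 :=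
    (Cardinal.mk_le_aleph0_iff.mpr (Set.countable_coe_iff.mpr hbc)).trans Cardinal.aleph0_le_continuum
  have h2 := MeasurableSpace.cardinal_measurableSet_le_continuum hble
  have he : {s : Set γ | MeasurableSet s}
      = {t | MeasurableSet[MeasurableSpace.generateFrom b] t} := by
    rw [← hb]
  rw [he]
  exact h2

lemma unitDisc_meas : MeasurableSet unitDisc :=
  (isClosed_le (by continuity) continuous_const).measurableSet

lemma unitDisc_pos : 0 < volume unitDisc := by
  have hsub : Set.Icc (0:ℝ) (1/2) ×ˢ Set.Icc (0:ℝ) (1/2) ⊆ unitDisc := by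
    rintro ⟨x, y⟩ ⟨⟨hx0, hx1⟩, ⟨hy0, hy1⟩⟩
    simp only [unitDisc, Set.mem_setOf_eq]
    nlinarith
  refine lt_of_lt_of_le ?_ (measure_mono hsub)
  rw [MeasureTheory.Measure.volume_eq_prod, Measure.prod_prod, Real.volume_Icc]
  norm_num

lemma inter_Ioo_pos {B : Set ℝ} (hBi : B ⊆ Set.Icc (-1:ℝ) 1) (hBm : MeasurableSet B)
    (hBp : 0 < volume B) : 0 < volume (B ∩ Set.Ioo (-1:ℝ) 1) := by
  rcases eq_or_ne (volume (B ∩ Set.Ioo (-1:ℝ) 1)) 0 with h0 | h0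
  · exfalso
    have h1 : volume (B \ Set.Ioo (-1:ℝ) 1) = 0 := by
      apply measure_mono_null (t := ({-1, 1} : Set ℝ)) ?_ ((Set.toFinite _).measure_zero _)
      · rintro p ⟨hpB, hpI⟩
        have := hBi hpB
        simp only [Set.mem_Icc] at this
        simp only [Set.mem_Ioo, not_and_or, not_lt] at hpI
        rcases hpI with h | h
        · left; linarith
        · right; simp; linarith
    have h2 := measure_union_le (μ := volume) (B ∩ Set.Ioo (-1:ℝ) 1) (B \ Set.Ioo (-1:ℝ) 1)
    rw [Set.inter_union_diff, h0, h1] at h2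
    simp at h2
    exact hBp.ne' h2
  · exact pos_iff_ne_zero.2 h0

abbrev DiscReq : Type := {B : Set (ℝ × ℝ) // B ⊆ unitDisc ∧ MeasurableSet B ∧ 0 < volume B}
abbrev SegReq : Type := ℝ × {B : Set ℝ // B ⊆ Set.Icc (-1:ℝ) 1 ∧ MeasurableSet B ∧ 0 < volume B}
abbrev Req : Type := DiscReq ⊕ SegReq

abbrev iot : Type := (Cardinal.continuum).ord.ToType

lemma req_card : #Req ≤ 𝔠 := by
  have hd : #DiscReq ≤ 𝔠 := by
    refine le_trans ?_ (card_measurableSets (ℝ × ℝ))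
    exact Cardinal.mk_le_mk_of_subset (fun B hB => hB.2.1)
  have ht : #{B : Set ℝ // B ⊆ Set.Icc (-1:ℝ) 1 ∧ MeasurableSet B ∧ 0 < volume B} ≤ 𝔠 := by
    refine le_trans ?_ (card_measurableSets ℝ)
    exact Cardinal.mk_le_mk_of_subset (fun B hB => hB.2.1)
  have hs : #SegReq ≤ 𝔠 := by
    have : #SegReq = #ℝ * #{B : Set ℝ // B ⊆ Set.Icc (-1:ℝ) 1 ∧ MeasurableSet B ∧ 0 < volume B} := by
      rw [Cardinal.mk_prod, Cardinal.lift_id, Cardinal.lift_id]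
    rw [this, ← Cardinal.mul_eq_self Cardinal.aleph0_le_continuum]
    exact mul_le_mul' Cardinal.mk_real.le ht
  have : #Req = #DiscReq + #SegReq := by
    rw [Cardinal.mk_sum, Cardinal.lift_id, Cardinal.lift_id]
  rw [this, ← Cardinal.add_eq_self Cardinal.aleph0_le_continuum]
  exact add_le_add hd hs

lemma req_nonempty : Nonempty Req :=
  ⟨Sum.inl ⟨unitDisc, subset_rfl, unitDisc_meas, unitDisc_pos⟩⟩

lemma exists_g : ∃ g : iot → Req, Function.Surjective g := by
  have h1 : #Req ≤ #iot := by
    rw [Cardinal.mk_ord_toType Cardinal.continuum]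
    exact req_card
  obtain ⟨f⟩ := (Cardinal.le_def _ _).mp h1
  haveI := req_nonempty
  exact ⟨Function.invFun f, Function.invFun_surjective f.injective⟩

noncomputable def greq : iot → Req := exists_g.choose

lemma greq_surj : Function.Surjective greq := exists_g.choose_spec

structure Ch where
  pa : ℝ × ℝ
  pe : Option (ℝ × ℝ)
  pl : Option (ℝ × ℝ)

def Pset {x : iot} (prev : ∀ y, y < x → Ch) : Set (ℝ × ℝ) := {p | ∃ y h, (prev y h).pa = p}
def Eset {x : iot} (prev : ∀ y, y < x → Ch) : Set (ℝ × ℝ) := {p | ∃ y h, (prev y h).pe = some p}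
def Lset {x : iot} (prev : ∀ y, y < x → Ch) : Set (ℝ × ℝ) := {l | ∃ y h, (prev y h).pl = some l}

lemma card_opt' {x : iot} {A : Type} (g : ↥(Set.Iio x) → Option A) :
    #{a | ∃ i, g i = some a} < 𝔠 :=
  (card_opt g).trans_lt (Cardinal.mk_Iio_toType_ord_lt x)

lemma Pset_small {x : iot} (prev : ∀ y, y < x → Ch) : #(Pset prev) < 𝔠 := by
  have h := card_opt' (fun i : ↥(Set.Iio x) => some ((prev i.1 i.2).pa))
  have he : Pset prev = {a | ∃ i : ↥(Set.Iio x), some ((prev i.1 i.2).pa) = some a} := by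
    ext p
    constructor
    · rintro ⟨y, h', rfl⟩; exact ⟨⟨y, h'⟩, rfl⟩
    · rintro ⟨⟨y, h'⟩, heq⟩; exact ⟨y, h', Option.some_inj.mp heq⟩
  rwa [he]

lemma Eset_small {x : iot} (prev : ∀ y, y < x → Ch) : #(Eset prev) < 𝔠 := by
  have h := card_opt' (fun i : ↥(Set.Iio x) => (prev i.1 i.2).pe)
  have he : Eset prev = {a | ∃ i : ↥(Set.Iio x), (prev i.1 i.2).pe = some a} := by
    ext p
    constructor
    · rintro ⟨y, h', hp⟩; exact ⟨⟨y, h'⟩, hp⟩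
    · rintro ⟨⟨y, h'⟩, heq⟩; exact ⟨y, h', heq⟩
  rwa [he]

lemma Lset_small {x : iot} (prev : ∀ y, y < x → Ch) : #(Lset prev) < 𝔠 := by
  have h := card_opt' (fun i : ↥(Set.Iio x) => (prev i.1 i.2).pl)
  have he : Lset prev = {a | ∃ i : ↥(Set.Iio x), (prev i.1 i.2).pl = some a} := by
    ext p
    constructor
    · rintro ⟨y, h', hp⟩; exact ⟨⟨y, h'⟩, hp⟩
    · rintro ⟨⟨y, h'⟩, heq⟩; exact ⟨y, h', heq⟩
  rwa [he]

def Spec (x : iot) (prev : ∀ y, y < x → Ch) (c : Ch) : Prop :=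
  c.pa ∈ unitDisc ∧
  (∀ l ∈ Lset prev, proj l.1 c.pa ≠ l.2) ∧
  c.pa ∉ Eset prev ∧
  (∀ B' : DiscReq, greq x = Sum.inl B' →
    c.pa ∈ B'.1 ∧ ∃ e, c.pe = some e ∧ e ∈ B'.1 ∧ e ∉ Pset prev ∧ e ≠ c.pa) ∧
  (∀ (α : ℝ) (B' : {B : Set ℝ // B ⊆ Set.Icc (-1:ℝ) 1 ∧ MeasurableSet B ∧ 0 < volume B}),
    greq x = Sum.inr (α, B') →
    proj α c.pa ∈ B'.1 ∧ ∃ m, c.pl = some (α, m) ∧ m ∈ B'.1 ∧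
      m ∉ proj α '' (Pset prev) ∧ m ≠ proj α c.pa)

lemma exists_spec (x : iot) (prev : ∀ y, y < x → Ch) : ∃ c, Spec x prev c := by
  rcases hg : greq x with B | ⟨α, B⟩
  · -- disc requirement
    obtain ⟨hBd, hBm, hBp⟩ := B.2
    obtain ⟨a, haB, haL, haE⟩ := planePick hBd hBm hBp (Lset_small prev) (Eset_small prev)
    have hBcard : 𝔠 ≤ #(B.1) := ctm_le_mk volume hBm hBp
    obtain ⟨e, heB, heP⟩ := pick_avoid hBcard (csmall_insert (Pset_small prev) a)
    refine ⟨⟨a, some e, none⟩, hBd haB, haL, haE, ?_, ?_⟩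
    · intro B' h'
      rw [hg] at h'
      have hBB := Sum.inl.inj h'
      subst hBB
      exact ⟨haB, e, rfl, heB, fun hP => heP (Set.mem_insert_of_mem _ hP),
        fun he => heP (he ▸ Set.mem_insert _ _)⟩
    · intro α' B' h'
      rw [hg] at h'
      exact absurd h' (by simp)
  · -- segment requirement
    obtain ⟨hBi, hBm, hBp⟩ := B.2
    have hIpos := inter_Ioo_pos hBi hBm hBp
    have hIcard : 𝔠 ≤ #(B.1 ∩ Set.Ioo (-1:ℝ) 1 : Set ℝ) :=
      ctm_le_mk volume (hBm.inter measurableSet_Ioo) hIpos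
    have hBadB : #((Prod.snd '' Lset prev) ∪ ((fun l : ℝ × ℝ => -l.2) '' Lset prev) : Set ℝ) < 𝔠 :=
      csmall_union (Cardinal.mk_image_le.trans_lt (Lset_small prev))
        (Cardinal.mk_image_le.trans_lt (Lset_small prev))
    obtain ⟨b, hbI, hbB⟩ := pick_avoid hIcard hBadB
    have hbL : ∀ l ∈ Lset prev, b ≠ l.2 ∧ b ≠ -l.2 := by
      intro l hl
      constructor
      · intro h; exact hbB (Or.inl ⟨l, hl, h.symm⟩)
      · intro h; exact hbB (Or.inr ⟨l, hl, h.symm⟩)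
    obtain ⟨p, hpd, hpb, hpL, hpE⟩ :=
      chordPick α hbI.2 (Lset_small prev) hbL (Eset_small prev)
    have hBcard : 𝔠 ≤ #(B.1) := ctm_le_mk volume hBm hBp
    have hsmall : #(insert (proj α p) (proj α '' Pset prev) : Set ℝ) < 𝔠 :=
      csmall_insert (Cardinal.mk_image_le.trans_lt (Pset_small prev)) _
    obtain ⟨m, hmB, hmP⟩ := pick_avoid hBcard hsmall
    refine ⟨⟨p, none, some (α, m)⟩, hpd, hpL, hpE, ?_, ?_⟩
    · intro B' h'
      rw [hg] at h'
      exact absurd h' (by simp)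
    · intro α' B' h'
      rw [hg] at h'
      have h2 := Sum.inr.inj h'
      have hα : α = α' := congrArg Prod.fst h2
      have hB : B = B' := congrArg Prod.snd h2
      subst hα; subst hB
      refine ⟨?_, m, rfl, hmB, fun hm => hmP (Set.mem_insert_of_mem _ hm),
        fun hm => hmP (hm ▸ Set.mem_insert _ _)⟩
      show proj α p ∈ B.1
      rw [hpb]
      exact hbI.1

noncomputable def FF : iot → Ch :=
  WellFounded.fix (IsWellFounded.wf (r := ((· < ·) : iot → iot → Prop)))
    (fun x IH => (exists_spec x IH).choose)

lemma FF_spec (x : iot) : Spec x (fun y _ => FF y) (FF x) := by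
  have h : FF x = (exists_spec x (fun y _ => FF y)).choose :=
    WellFounded.fix_eq _ _ x
  rw [h]
  exact (exists_spec x (fun y _ => FF y)).choose_spec


theorem stmt7 :
    ∃ A : Set (ℝ × ℝ), A ⊆ unitDisc ∧
      (∀ B : Set (ℝ × ℝ), B ⊆ unitDisc → MeasurableSet B → 0 < volume B →
        (A ∩ B).Nonempty ∧ (B \ A).Nonempty) ∧
      ∀ α ∈ Set.Ico (0 : ℝ) Real.pi,
        ∀ B : Set ℝ, B ⊆ Set.Icc (-1 : ℝ) 1 → MeasurableSet B → 0 < volume B →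
          (proj α '' A ∩ B).Nonempty ∧ (B \ proj α '' A).Nonempty := by
  refine ⟨Set.range (fun x => (FF x).pa), ?_, ?_, ?_⟩
  · rintro p ⟨x, rfl⟩
    exact (FF_spec x).1
  · intro B hBd hBm hBp
    obtain ⟨x, hx⟩ := greq_surj (Sum.inl ⟨B, hBd, hBm, hBp⟩)
    obtain ⟨hdisc, hlines, hnotE, hc4, hc5⟩ := FF_spec x
    obtain ⟨hpaB, e, hpe, heB, heP, hea⟩ := hc4 ⟨B, hBd, hBm, hBp⟩ hx
    constructor
    · exact ⟨(FF x).pa, ⟨x, rfl⟩, hpaB⟩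
    · refine ⟨e, heB, ?_⟩
      rintro ⟨z, hz⟩
      rcases lt_trichotomy z x with h | h | h
      · exact heP ⟨z, h, hz⟩
      · subst h; exact hea hz.symm
      · obtain ⟨_, _, hnotE', _, _⟩ := FF_spec z
        have hz' : (FF z).pa = e := hz
        exact hnotE' ⟨x, h, by rw [hpe, hz']⟩
  · intro α _ B hBi hBm hBp
    obtain ⟨x, hx⟩ := greq_surj (Sum.inr (α, ⟨B, hBi, hBm, hBp⟩))
    obtain ⟨hdisc, hlines, hnotE, hc4, hc5⟩ := FF_spec x
    obtain ⟨hprojB, m, hpl, hmB, hmP, hmne⟩ := hc5 α ⟨B, hBi, hBm, hBp⟩ hx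
    constructor
    · exact ⟨proj α (FF x).pa, ⟨(FF x).pa, ⟨x, rfl⟩, rfl⟩, hprojB⟩
    · refine ⟨m, hmB, ?_⟩
      rintro ⟨p, ⟨z, rfl⟩, hpm⟩
      rcases lt_trichotomy z x with h | h | h
      · exact hmP ⟨(FF z).pa, ⟨z, h, rfl⟩, hpm⟩
      · subst h; exact hmne hpm.symm
      · obtain ⟨_, hlines', _, _, _⟩ := FF_spec z
        exact hlines' (α, m) ⟨x, h, hpl⟩ hpm
end

section
/- There exists a subset A of the closed unit disc D = {(x,y) ∈ ℝ² : x² + y² ≤ 1} such that the set of angles α ∈ [0, π) for which the projection π_α[A] = {x·cos α + y·sin α : (x,y) ∈ A} is not Lebesgue measurable and does not have the Baire property has cardinality 𝔠, and the set of angles α ∈ [0, π) for which π_α[A] is Lebesgue measurable and has the Baire property also has cardinality 𝔠. -/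
open MeasureTheory

/-- `S` has the Baire property: it differs from some open set by a meager set. -/
def HasBaireProperty {X : Type*} [TopologicalSpace X] (S : Set X) : Prop :=
  ∃ U : Set X, IsOpen U ∧ IsMeagre (symmDiff S U)

/-- `S` is Lebesgue measurable, i.e. measurable with respect to the completed
Lebesgue measure. -/
def LebesgueMeasurable (S : Set ℝ) : Prop :=
  NullMeasurableSet S volume

namespace Stmt9

open Set Filter Topology
open scoped ENNReal

/-- The rationals as an additive subgroup of `ℝ`. -/
noncomputable def Qsub : AddSubgroup ℝ := (Rat.castHom ℝ).toAddMonoidHom.range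

lemma mem_Qsub {x : ℝ} : x ∈ Qsub ↔ ∃ q : ℚ, (q : ℝ) = x := by
  simp [Qsub, AddMonoidHom.mem_range]

lemma exists_rep (c : ℝ ⧸ Qsub) :
    ∃ v : ℝ, v ∈ Set.Icc (1/2 : ℝ) 1 ∧ (QuotientAddGroup.mk v : ℝ ⧸ Qsub) = c := by
  obtain ⟨x, rfl⟩ := QuotientAddGroup.mk_surjective c
  obtain ⟨q, hq1, hq2⟩ := exists_rat_btwn (show (1/2 : ℝ) - x < 1 - x by linarith)
  refine ⟨x + q, ⟨by linarith, by linarith⟩, ?_⟩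
  rw [QuotientAddGroup.eq]
  exact mem_Qsub.mpr ⟨-q, by push_cast; ring⟩

/-- A Vitali set inside `[1/2, 1]`. -/
noncomputable def vit : Set ℝ := Set.range fun c : ℝ ⧸ Qsub => (exists_rep c).choose

lemma vit_subset : vit ⊆ Set.Icc (1/2 : ℝ) 1 := by
  rintro v ⟨c, rfl⟩; exact (exists_rep c).choose_spec.1

lemma vit_mk (c : ℝ ⧸ Qsub) :
    (QuotientAddGroup.mk (exists_rep c).choose : ℝ ⧸ Qsub) = c :=
  (exists_rep c).choose_spec.2

lemma vit_cover (x : ℝ) : ∃ v ∈ vit, ∃ q : ℚ, x - v = (q : ℝ) := by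
  refine ⟨(exists_rep (QuotientAddGroup.mk x)).choose, ⟨_, rfl⟩, ?_⟩
  have h := vit_mk (QuotientAddGroup.mk x)
  rw [QuotientAddGroup.eq] at h
  obtain ⟨q, hq⟩ := mem_Qsub.mp h
  exact ⟨q, by linarith⟩

lemma vit_sep {v w : ℝ} (hv : v ∈ vit) (hw : w ∈ vit) {q : ℚ}
    (h : v - w = (q : ℝ)) : v = w := by
  obtain ⟨c, rfl⟩ := hv
  obtain ⟨d, rfl⟩ := hw
  have hcd : c = d := by
    rw [← vit_mk c, ← vit_mk d, QuotientAddGroup.eq]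
    exact mem_Qsub.mpr ⟨-q, by push_cast; linarith⟩
  rw [hcd]

section scaled

variable {c : ℝ}

/-- The scaled Vitali set. -/
noncomputable def W (c : ℝ) : Set ℝ := (fun v => v * c) '' vit

lemma W_subset (hc : 0 < c) : W c ⊆ Set.Icc (c/2) c := by
  rintro _ ⟨v, hv, rfl⟩
  obtain ⟨h1, h2⟩ := vit_subset hv
  constructor <;> dsimp only <;> nlinarith

lemma W_sep (hc : 0 < c) : ∀ x ∈ W c, ∀ y ∈ W c, (∃ q : ℚ, x - y = c * q) → x = y := by
  rintro _ ⟨v, hv, rfl⟩ _ ⟨w, hw, rfl⟩ ⟨q, hq⟩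
  have h' : (v - w) * c = (q : ℝ) * c := by ring_nf; ring_nf at hq; linarith
  have := mul_right_cancel₀ hc.ne' h'
  rw [vit_sep hv hw this]

lemma W_cover (hc : 0 < c) (x : ℝ) : ∃ y ∈ W c, ∃ q : ℚ, x - y = c * q := by
  obtain ⟨v, hv, q, hq⟩ := vit_cover (x / c)
  refine ⟨v * c, ⟨v, hv, rfl⟩, q, ?_⟩
  field_simp at hq
  linarith

lemma W_not_nullMeasurable (hc : 0 < c) (hc1 : c ≤ 1) :
    ¬ NullMeasurableSet (W c) volume := by
  intro h
  -- the translates of `W c` by `c * (1/(n+1))`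
  set qn : ℕ → ℚ := fun n => ((n : ℚ) + 1)⁻¹ with hqn
  have qn_pos : ∀ n, 0 < qn n := fun n => by positivity
  have qn_le_one : ∀ n, qn n ≤ 1 := fun n => by
    rw [hqn]
    rw [inv_le_one_iff₀]
    right; linarith [Nat.cast_nonneg (α := ℚ) n]
  have qn_inj : Function.Injective qn := by
    intro n m hnm
    simp only [hqn] at hnm
    have h3 : ((n : ℚ) + 1) = ((m : ℚ) + 1) := by
      simpa using congrArg (·⁻¹) hnm
    have : (n : ℚ) = m := by linarith
    exact_mod_cast this
  set t : ℕ → Set ℝ := fun n => (· + c * (qn n : ℝ)) ⁻¹' W c with ht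
  have htm : ∀ n, NullMeasurableSet (t n) volume := fun n =>
    h.preimage (measurePreserving_add_right volume _).quasiMeasurePreserving
  have htvol : ∀ n, volume (t n) = volume (W c) := fun n =>
    (measurePreserving_add_right volume _).measure_preimage h
  have hdisj : Pairwise (Function.onFun Disjoint t) := by
    intro n m hnm
    simp only [Function.onFun]
    rw [Set.disjoint_left]
    rintro x hxn hxm
    have hx : (x + c * qn n) - (x + c * qn m) = c * ((qn n - qn m : ℚ) : ℝ) := by
      push_cast; ring
    have h4 := W_sep hc _ hxn _ hxm ⟨_, hx⟩
    have h5 : c * (qn n : ℝ) = c * (qn m : ℝ) := add_left_cancel h4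
    have h6 : (qn n : ℝ) = qn m := mul_left_cancel₀ hc.ne' h5
    exact hnm (qn_inj (by exact_mod_cast h6))
  have hsub : (⋃ n, t n) ⊆ Set.Icc (-1 : ℝ) 2 := by
    rintro x hx
    obtain ⟨n, hn⟩ := Set.mem_iUnion.mp hx
    have h1 := (W_subset hc hn).1
    have h2 := (W_subset hc hn).2
    have h3 : 0 < c * (qn n : ℝ) := by
      have := qn_pos n
      have : (0:ℝ) < (qn n : ℝ) := by exact_mod_cast this
      positivity
    have h4 : c * (qn n : ℝ) ≤ c := by
      have : (qn n : ℝ) ≤ 1 := by exact_mod_cast qn_le_one n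
      nlinarith
    constructor <;> dsimp at h1 h2 <;> nlinarith
  have hvol0 : volume (W c) = 0 := by
    by_contra h0
    have hU : volume (⋃ n, t n) = ∑' n, volume (t n) :=
      measure_iUnion₀ (fun n m hnm => (hdisj hnm).aedisjoint) htm
    have : (⊤ : ℝ≥0∞) ≤ volume (Set.Icc (-1 : ℝ) 2) := by
      calc (⊤ : ℝ≥0∞) = ∑' _ : ℕ, volume (W c) :=
            (ENNReal.tsum_const_eq_top_of_ne_zero h0).symm
        _ = ∑' n, volume (t n) := by simp_rw [htvol]
        _ = volume (⋃ n, t n) := hU.symm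
        _ ≤ volume (Set.Icc (-1 : ℝ) 2) := measure_mono hsub
    rw [Real.volume_Icc] at this
    exact ENNReal.ofReal_lt_top.not_ge this
  -- but countably many translates of `W c` cover `ℝ`
  have hcov : (Set.univ : Set ℝ) ⊆ ⋃ q : ℚ, (· + c * (q : ℝ)) ⁻¹' W c := by
    intro x _
    obtain ⟨y, hy, q, hq⟩ := W_cover hc x
    refine Set.mem_iUnion.mpr ⟨-q, ?_⟩
    have : x + c * ((-q : ℚ) : ℝ) = y := by push_cast; linarith
    show x + c * ((-q : ℚ) : ℝ) ∈ W c
    rw [this]; exact hy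
  have : volume (Set.univ : Set ℝ) ≤ ∑' q : ℚ, volume ((· + c * (q : ℝ)) ⁻¹' W c) :=
    (measure_mono hcov).trans (measure_iUnion_le _)
  rw [Real.volume_univ] at this
  have hz : ∀ q : ℚ, volume ((· + c * (q : ℝ)) ⁻¹' W c) = 0 := fun q => by
    rw [(measurePreserving_add_right volume _).measure_preimage h, hvol0]
  simp [hz] at this

lemma isMeagre_translate {M : Set ℝ} (hM : IsMeagre M) (a : ℝ) :
    IsMeagre ((· + a) ⁻¹' M) :=
  hM.preimage_of_isOpenMap (continuous_add_right a) (Homeomorph.addRight a).isOpenMap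

lemma W_not_hasBaireProperty (hc : 0 < c) : ¬ HasBaireProperty (W c) := by
  rintro ⟨U, hUopen, hM⟩
  have hUW : ∀ y, y ∈ U → y ∉ symmDiff (W c) U → y ∈ W c := by
    intro y hyU hyM
    by_contra h
    exact hyM (Set.mem_symmDiff.mpr (Or.inr ⟨hyU, h⟩))
  rcases Set.eq_empty_or_nonempty U with rfl | ⟨x, hx⟩
  · -- `W c` itself is meagre, but its rational translates cover `ℝ`
    have hWm : IsMeagre (W c) := by
      have : symmDiff (W c) (∅ : Set ℝ) = W c := by
        simp [Set.symmDiff_def]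
      rwa [this] at hM
    have hcov : (Set.univ : Set ℝ) ⊆ ⋃ q : ℚ, (· + c * (q : ℝ)) ⁻¹' W c := by
      intro x _
      obtain ⟨y, hy, q, hq⟩ := W_cover hc x
      refine Set.mem_iUnion.mpr ⟨-q, ?_⟩
      have : x + c * ((-q : ℚ) : ℝ) = y := by push_cast; linarith
      show x + c * ((-q : ℚ) : ℝ) ∈ W c
      rw [this]; exact hy
    have hmu : IsMeagre (Set.univ : Set ℝ) := by
      refine IsMeagre.mono hcov ?_
      rw [← Function.Surjective.iUnion_comp (Equiv.surjective (Denumerable.eqv ℚ).symm)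
        (fun q : ℚ => (· + c * (q : ℝ)) ⁻¹' W c)]
      exact isMeagre_iUnion fun n => isMeagre_translate hWm _
    have : Dense (∅ : Set ℝ) := by
      have := dense_of_mem_residual (by simpa [IsMeagre] using hmu)
      simpa using this
    exact absurd this.nonempty (by simp)
  · obtain ⟨ε, hε, hball⟩ := Metric.isOpen_iff.mp hUopen x hx
    obtain ⟨q, hq0, hqε⟩ := exists_rat_btwn (div_pos hε hc)
    have hq0' : (0 : ℝ) < q := by exact_mod_cast hq0
    set d : ℝ := c * q with hd
    have hd0 : 0 < d := by positivity
    have hdε : d < ε := by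
      have h7 := (lt_div_iff₀ hc).mp hqε
      have h8 : c * (q : ℝ) = (q : ℝ) * c := mul_comm _ _
      rw [hd, h8]
      exact h7
    set G : Set ℝ := U ∩ ((· + d) ⁻¹' U) with hG
    have hGopen : IsOpen G := hUopen.inter (hUopen.preimage (continuous_add_right d))
    have hGne : G.Nonempty := by
      refine ⟨x - d/2, ?_, ?_⟩
      · apply hball
        rw [Metric.mem_ball, Real.dist_eq]
        rw [show x - d/2 - x = -(d/2) by ring, abs_neg, abs_of_pos (by linarith)]
        linarith
      · simp only [Set.mem_preimage]
        apply hball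
        rw [Metric.mem_ball, Real.dist_eq]
        rw [show x - d/2 + d - x = d/2 by ring, abs_of_pos (by linarith)]
        linarith
    set N : Set ℝ := symmDiff (W c) U ∪ ((· + d) ⁻¹' symmDiff (W c) U) with hN
    have hNm : IsMeagre N := by
      rw [IsMeagre, hN, Set.compl_union]
      exact Filter.inter_mem hM (isMeagre_translate hM d)
    have hdense : Dense Nᶜ := dense_of_mem_residual hNm
    obtain ⟨y, hyG, hyN⟩ := hdense.inter_open_nonempty G hGopen hGne
    rw [hN, Set.mem_compl_iff, Set.mem_union] at hyN
    push_neg at hyN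
    have hy1 : y ∈ W c := hUW y hyG.1 hyN.1
    have hy2 : y + d ∈ W c := hUW _ hyG.2 hyN.2
    have h9 := W_sep hc _ hy2 _ hy1 ⟨q, by rw [hd]; ring⟩
    linarith [h9]

end scaled

/-- Our set `A`: the Vitali set on the x-axis plus a vertical segment. -/
noncomputable def A : Set (ℝ × ℝ) :=
  ((fun v => (v, (0:ℝ))) '' vit) ∪ ((fun y => ((0:ℝ), y)) '' Set.Icc (-1:ℝ) 1)

lemma A_subset : A ⊆ unitDisc := by
  rintro p (⟨v, hv, rfl⟩ | ⟨y, hy, rfl⟩)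
  · obtain ⟨h1, h2⟩ := vit_subset hv
    show v ^ 2 + 0 ^ 2 ≤ 1
    nlinarith
  · obtain ⟨h1, h2⟩ := hy
    show (0:ℝ) ^ 2 + y ^ 2 ≤ 1
    nlinarith

lemma img (α : ℝ) : proj α '' A =
    ((fun v => v * Real.cos α) '' vit) ∪
      ((fun y => y * Real.sin α) '' Set.Icc (-1:ℝ) 1) := by
  rw [A, Set.image_union, Set.image_image, Set.image_image]
  simp [proj]

lemma good_img {α : ℝ} (h0 : 0 ≤ Real.cos α) (h1 : Real.cos α ≤ Real.sin α)
    (hs : 0 < Real.sin α) :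
    proj α '' A = Set.Icc (-Real.sin α) (Real.sin α) := by
  rw [img]
  have h2 : (fun y => y * Real.sin α) '' Set.Icc (-1:ℝ) 1
      = Set.Icc (-Real.sin α) (Real.sin α) := by
    rw [Set.image_mul_right_Icc (by norm_num) hs.le, neg_one_mul, one_mul]
  rw [h2, Set.union_eq_self_of_subset_left]
  rintro _ ⟨v, hv, rfl⟩
  obtain ⟨hv1, hv2⟩ := vit_subset hv
  dsimp only
  constructor
  · nlinarith [mul_nonneg (by linarith : (0:ℝ) ≤ v) h0]
  · nlinarith [mul_nonneg (by linarith : (0:ℝ) ≤ 1 - v) h0]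

lemma isMeagre_singleton' (a : ℝ) : IsMeagre ({a} : Set ℝ) :=
  residual_of_dense_open isOpen_compl_singleton (dense_compl_singleton a)

lemma hasBaireProperty_Icc (a b : ℝ) : HasBaireProperty (Set.Icc a b) := by
  have hpair : IsMeagre ({a, b} : Set ℝ) := by
    have h : ({a, b} : Set ℝ) = {a} ∪ {b} := Set.insert_eq a {b}
    rw [IsMeagre, h, Set.compl_union]
    exact Filter.inter_mem (isMeagre_singleton' a) (isMeagre_singleton' b)
  refine ⟨Set.Ioo a b, isOpen_Ioo, hpair.mono ?_⟩
  · intro x hx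
    rcases Set.mem_symmDiff.mp hx with ⟨⟨hx1, hx2⟩, hx3⟩ | ⟨hx1, hx2⟩
    · rcases hx1.eq_or_lt.imp Eq.symm id with h | h
      · exact Or.inl h
      · rcases hx2.eq_or_lt with h' | h'
        · exact Or.inr h'
        · exact absurd ⟨h, h'⟩ hx3
    · exact absurd (Set.Ioo_subset_Icc_self hx1) hx2

lemma bad_inter {α : ℝ} (hcpos : 0 < Real.cos α) (hs0 : 0 ≤ Real.sin α)
    (hlt : 2 * Real.sin α < Real.cos α) :
    (proj α '' A) ∩ Set.Ioi (Real.sin α) = W (Real.cos α) := by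
  rw [img]
  ext x
  constructor
  · rintro ⟨hx1 | hx1, hx2⟩
    · exact hx1
    · exfalso
      obtain ⟨y, ⟨hy1, hy2⟩, rfl⟩ := hx1
      rw [Set.mem_Ioi] at hx2
      dsimp only at hx2
      nlinarith [mul_nonneg (by linarith : (0:ℝ) ≤ 1 - y) hs0]
  · intro hx
    obtain ⟨v, hv, rfl⟩ := hx
    obtain ⟨hv1, hv2⟩ := vit_subset hv
    refine ⟨Or.inl ⟨v, hv, rfl⟩, ?_⟩
    rw [Set.mem_Ioi]
    dsimp only
    nlinarith [mul_nonneg (by linarith : (0:ℝ) ≤ v - 1/2) hcpos.le]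

lemma bad_not_meas {α : ℝ} (hcpos : 0 < Real.cos α) (hc1 : Real.cos α ≤ 1)
    (hs0 : 0 ≤ Real.sin α) (hlt : 2 * Real.sin α < Real.cos α) :
    ¬ LebesgueMeasurable (proj α '' A) := by
  intro h
  have := h.inter (measurableSet_Ioi (a := Real.sin α)).nullMeasurableSet
  rw [bad_inter hcpos hs0 hlt] at this
  exact W_not_nullMeasurable hcpos hc1 this

lemma bad_not_bp {α : ℝ} (hcpos : 0 < Real.cos α)
    (hs0 : 0 ≤ Real.sin α) (hlt : 2 * Real.sin α < Real.cos α) :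
    ¬ HasBaireProperty (proj α '' A) := by
  rintro ⟨U, hUopen, hM⟩
  refine W_not_hasBaireProperty hcpos (c := Real.cos α) ?_
  rw [← bad_inter hcpos hs0 hlt]
  refine ⟨U ∩ Set.Ioi (Real.sin α), hUopen.inter isOpen_Ioi, IsMeagre.mono ?_ hM⟩
  intro x hx
  rcases Set.mem_symmDiff.mp hx with ⟨⟨h1, h2⟩, h3⟩ | ⟨⟨h1, h2⟩, h3⟩
  · exact Set.mem_symmDiff.mpr (Or.inl ⟨h1, fun hU => h3 ⟨hU, h2⟩⟩)
  · exact Set.mem_symmDiff.mpr (Or.inr ⟨h1, fun hS => h3 ⟨hS, h2⟩⟩)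

lemma bad_angle {α : ℝ} (h0 : 0 ≤ α) (h1 : α < 2/5) :
    0 < Real.cos α ∧ Real.cos α ≤ 1 ∧ 0 ≤ Real.sin α ∧
      2 * Real.sin α < Real.cos α := by
  have hcos : 1 - α^2/2 ≤ Real.cos α := Real.one_sub_sq_div_two_le_cos
  have hsin : Real.sin α ≤ α := Real.sin_le h0
  have hsin0 : 0 ≤ Real.sin α :=
    Real.sin_nonneg_of_nonneg_of_le_pi h0 (by linarith [Real.pi_gt_three])
  refine ⟨by nlinarith, Real.cos_le_one α, hsin0, by nlinarith⟩

lemma good_angle {α : ℝ} (h0 : Real.pi/4 ≤ α) (h1 : α ≤ Real.pi/2) :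
    0 ≤ Real.cos α ∧ Real.cos α ≤ Real.sin α ∧ 0 < Real.sin α := by
  have hpi := Real.pi_pos
  refine ⟨Real.cos_nonneg_of_mem_Icc ⟨by linarith, h1⟩, ?_, ?_⟩
  · have := Real.cos_le_cos_of_nonneg_of_le_pi
      (x := Real.pi/2 - α) (y := α) (by linarith) (by linarith) (by linarith)
    rwa [Real.cos_pi_div_two_sub] at this
  · exact Real.sin_pos_of_pos_of_lt_pi (by linarith) (by linarith)

lemma card_helper {s t : Set ℝ} (hsub : t ⊆ s) (h : Cardinal.mk t = Cardinal.continuum) :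
    Cardinal.mk s = Cardinal.continuum :=
  le_antisymm ((Cardinal.mk_set_le s).trans_eq Cardinal.mk_real)
    (h ▸ Cardinal.mk_le_mk_of_subset hsub)

end Stmt9

theorem stmt9 :
    ∃ A : Set (ℝ × ℝ), A ⊆ unitDisc ∧
      Cardinal.mk ↥{α ∈ Set.Ico (0 : ℝ) Real.pi |
          ¬LebesgueMeasurable (proj α '' A) ∧ ¬HasBaireProperty (proj α '' A)} =
        Cardinal.continuum ∧
      Cardinal.mk ↥{α ∈ Set.Ico (0 : ℝ) Real.pi |
          LebesgueMeasurable (proj α '' A) ∧ HasBaireProperty (proj α '' A)} =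
        Cardinal.continuum := by
  have hpi := Real.pi_gt_three
  refine ⟨Stmt9.A, Stmt9.A_subset, ?_, ?_⟩
  · refine Stmt9.card_helper (t := Set.Ico (0:ℝ) (2/5)) ?_ (Cardinal.mk_Ico_real (by norm_num))
    rintro α ⟨h0, h1⟩
    obtain ⟨hc, hc1, hs, hlt⟩ := Stmt9.bad_angle h0 h1
    exact ⟨⟨h0, by linarith⟩, Stmt9.bad_not_meas hc hc1 hs hlt,
      Stmt9.bad_not_bp hc hs hlt⟩
  · refine Stmt9.card_helper (t := Set.Icc (Real.pi/4) (Real.pi/2)) ?_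
      (Cardinal.mk_Icc_real (by linarith))
    rintro α ⟨h0, h1⟩
    obtain ⟨hc, hcs, hs⟩ := Stmt9.good_angle h0 h1
    have himg := Stmt9.good_img hc hcs hs
    refine ⟨⟨by linarith, by linarith⟩, ?_, ?_⟩
    · rw [LebesgueMeasurable, himg]
      exact measurableSet_Icc.nullMeasurableSet
    · rw [himg]
      exact Stmt9.hasBaireProperty_Icc _ _
end

section
/- There exist a set A contained in the open unit disc U = {(x,y) ∈ ℝ² : x² + y² < 1} and disjoint sets F, G ⊆ [0, π) with [0, π) = F ∪ G such that F and G are both Bernstein sets in [0, π), for every α ∈ F the projection π_α[A] = {x·cos α + y·sin α : (x,y) ∈ A} equals the open interval (-1, 1), and for every α ∈ G the projection π_α[A] is a Bernstein set in (-1, 1). -/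
open Set Cardinal

namespace Stmt12Aux

noncomputable section

/-- Every open subset of `ℝ` is the union of the rational intervals inside it. -/
lemma isOpen_eq_biUnion {U : Set ℝ} (hU : IsOpen U) :
    U = ⋃ x ∈ {q : ℚ × ℚ | Ioo (q.1 : ℝ) (q.2 : ℝ) ⊆ U}, Ioo ((x.1 : ℝ)) (x.2 : ℝ) := by
  apply subset_antisymm
  · intro x hx
    obtain ⟨ε, hε, hball⟩ := Metric.isOpen_iff.mp hU x hx
    obtain ⟨p, hp1, hp2⟩ := exists_rat_btwn (show x - ε < x by linarith)
    obtain ⟨q, hq1, hq2⟩ := exists_rat_btwn (show x < x + ε by linarith)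
    have hsub : Ioo (p : ℝ) (q : ℝ) ⊆ U := by
      intro y hy
      apply hball
      rw [Real.ball_eq_Ioo]
      exact ⟨by linarith [hy.1], by linarith [hy.2]⟩
    exact mem_biUnion (x := ((p,q) : ℚ × ℚ)) hsub ⟨hp2, hq1⟩
  · exact iUnion₂_subset fun q hq => hq

/-- There are at most continuum many closed subsets of `ℝ`. -/
lemma card_closeds : #{C : Set ℝ // IsClosed C} ≤ 𝔠 := by
  have hinj : Function.Injective
      (fun C : {C : Set ℝ // IsClosed C} => {q : ℚ × ℚ | Ioo (q.1 : ℝ) (q.2 : ℝ) ⊆ (C : Set ℝ)ᶜ}) := by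
    intro C D h
    apply Subtype.ext
    rw [← compl_compl (C : Set ℝ), ← compl_compl (D : Set ℝ)]
    congr 1
    rw [isOpen_eq_biUnion C.2.isOpen_compl, isOpen_eq_biUnion D.2.isOpen_compl]
    exact congrArg (fun S : Set (ℚ × ℚ) => ⋃ x ∈ S, Ioo ((x.1 : ℝ)) (x.2 : ℝ)) h
  calc #{C : Set ℝ // IsClosed C} ≤ #(Set (ℚ × ℚ)) := mk_le_of_injective hinj
    _ = 2 ^ #(ℚ × ℚ) := mk_set
    _ = 2 ^ ℵ₀ := by rw [mk_eq_aleph0 (ℚ × ℚ)]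
    _ = 𝔠 := two_power_aleph0

variable {Y : Set ℝ}

lemma preperfect_image {P : Set Y} (hP : Perfect P) :
    Preperfect (Subtype.val '' P) := by
  rw [preperfect_iff_nhds]
  rintro x ⟨y, hyP, rfl⟩ U hU
  have h1 : Subtype.val ⁻¹' U ∈ nhds y :=
    (continuous_subtype_val.continuousAt).preimage_mem_nhds hU
  obtain ⟨z, hz, hzy⟩ := (preperfect_iff_nhds.mp hP.acc) y hyP _ h1
  exact ⟨z, ⟨hz.1, ⟨z, hz.2, rfl⟩⟩, fun h => hzy (Subtype.ext h)⟩

lemma image_closed_eq {P : Set Y} (hP : IsClosed P) :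
    Subtype.val '' P = closure (Subtype.val '' P) ∩ Y := by
  obtain ⟨C, hC, hPC⟩ := isClosed_induced_iff.mp hP
  have himg : Subtype.val '' P ⊆ C := by
    rintro _ ⟨y, hy, rfl⟩
    rw [← hPC] at hy
    exact hy
  apply subset_antisymm
  · exact subset_inter subset_closure (by rintro _ ⟨y, _, rfl⟩; exact y.2)
  · rintro x ⟨hx1, hx2⟩
    have hxC : x ∈ C := closure_minimal himg hC hx1
    exact ⟨⟨x, hx2⟩, by rw [← hPC]; exact hxC, rfl⟩

lemma card_perfect_image (hYc : (closure Y \ Y).Countable) {P : Set Y}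
    (hP : Perfect P) (hne : P.Nonempty) : 𝔠 ≤ #(Subtype.val '' P) := by
  set Q := Subtype.val '' P with hQ
  have hQne : Q.Nonempty := hne.image _
  have hQY : Q ⊆ Y := by rintro _ ⟨y, _, rfl⟩; exact y.2
  have hcl : Perfect (closure Q) := (preperfect_image hP).perfect_closure
  obtain ⟨f, hfQ, -, hfinj⟩ := hcl.exists_nat_bool_injection (hQne.mono subset_closure)
  have h1 : 𝔠 ≤ #(closure Q) := by
    have h2 : #(ℕ → Bool) ≤ #(closure Q) :=
      mk_le_of_injective (f := fun x : ℕ → Bool => (⟨f x, hfQ (mem_range_self x)⟩ : closure Q))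
        (fun a b hab => hfinj (congrArg Subtype.val hab))
    calc 𝔠 = 2 ^ ℵ₀ := two_power_aleph0.symm
      _ = #(ℕ → Bool) := by rw [← mk_bool, ← mk_nat, power_def]
      _ ≤ _ := h2
  have hsub : closure Q ⊆ Q ∪ (closure Y \ Y) := by
    intro x hx
    by_cases hxY : x ∈ Y
    · left; rw [hQ, image_closed_eq hP.closed]; exact ⟨hx, hxY⟩
    · right; exact ⟨closure_mono hQY hx, hxY⟩
  by_contra h
  push_neg at h
  have h3 : #(closure Q) ≤ #Q + #↥(closure Y \ Y) :=
    (mk_le_mk_of_subset hsub).trans (mk_union_le _ _)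
  have hYle : #↥(closure Y \ Y) ≤ ℵ₀ := mk_le_aleph0_iff.mpr hYc.to_subtype
  have h4 : #(closure Q) < 𝔠 :=
    lt_of_le_of_lt h3 (add_lt_of_lt aleph0_le_continuum h (lt_of_le_of_lt hYle aleph0_lt_continuum))
  exact absurd h1 h4.not_ge

/-- The collection of perfect subsets of a subspace of `ℝ` has size at most continuum. -/
lemma card_perfects : #{P : Set Y // PerfectSet P} ≤ 𝔠 := by
  have hinj : Function.Injective
      (fun P : {P : Set Y // PerfectSet P} =>
        (⟨closure (Subtype.val '' P.1), isClosed_closure⟩ : {C : Set ℝ // IsClosed C})) := by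
    intro P Q h
    have h' : closure (Subtype.val '' P.1) = closure (Subtype.val '' Q.1) :=
      congrArg Subtype.val h
    have himg : Subtype.val '' P.1 = Subtype.val '' Q.1 := by
      rw [image_closed_eq P.2.1.closed, image_closed_eq Q.2.1.closed, h']
    apply Subtype.ext
    rw [← preimage_image_eq P.1 Subtype.coe_injective,
      ← preimage_image_eq Q.1 Subtype.coe_injective, himg]
  exact (mk_le_of_injective hinj).trans card_closeds

/-- Selection: a set of size continuum cannot be covered by a smaller set. -/
lemma exists_mem_not_mem {X : Type*} {s bad : Set X} (hs : 𝔠 ≤ #s) (hb : #bad < 𝔠) :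
    ∃ x ∈ s, x ∉ bad := by
  by_contra h
  push_neg at h
  exact absurd (hs.trans (mk_le_mk_of_subset h)) hb.not_ge

lemma sin_ne_zero_of_mem {α β : ℝ} (hα : α ∈ Ico 0 Real.pi) (hβ : β ∈ Ico 0 Real.pi)
    (hne : β ≠ α) : Real.sin (β - α) ≠ 0 := by
  rcases hne.lt_or_gt with h | h
  · have h1 : -Real.pi < β - α := by linarith [hα.2, hβ.1]
    have h2 : β - α < 0 := by linarith
    exact (Real.sin_neg_of_neg_of_neg_pi_lt h2 h1).ne
  · have h1 : 0 < β - α := by linarith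
    have h2 : β - α < Real.pi := by linarith [hβ.2, hα.1]
    exact (Real.sin_pos_of_pos_of_lt_pi h1 h2).ne'

lemma proj_phi (α β t u : ℝ) :
    proj β (t * Real.cos α - u * Real.sin α, t * Real.sin α + u * Real.cos α)
      = t * Real.cos (α - β) + u * Real.sin (β - α) := by
  simp only [proj, Real.cos_sub, Real.sin_sub]
  ring

lemma proj_mem_Ioo {α : ℝ} {p : ℝ × ℝ} (hp : p.1 ^ 2 + p.2 ^ 2 < 1) :
    proj α p ∈ Ioo (-1 : ℝ) 1 := by
  have h := Real.sin_sq_add_cos_sq α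
  constructor
  · simp only [proj]
    nlinarith [sq_nonneg (p.1 * Real.sin α - p.2 * Real.cos α),
      sq_nonneg (p.1 * Real.cos α + p.2 * Real.sin α + 1)]
  · simp only [proj]
    nlinarith [sq_nonneg (p.1 * Real.sin α - p.2 * Real.cos α),
      sq_nonneg (p.1 * Real.cos α + p.2 * Real.sin α - 1)]

/-- Key geometric selection lemma: find a point of the open disc on the line
`proj α = t` avoiding fewer than continuum many other lines. -/
lemma seg_point {α t : ℝ} (hα : α ∈ Ico 0 Real.pi) (ht : t ∈ Ioo (-1 : ℝ) 1)
    {L : Set (ℝ × ℝ)} (hL : #↥L < 𝔠)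
    (hLmem : ∀ ls ∈ L, ls.1 ∈ Ico 0 Real.pi ∧ (ls.1 = α → ls.2 ≠ t)) :
    ∃ p : ℝ × ℝ, p.1 ^ 2 + p.2 ^ 2 < 1 ∧ proj α p = t ∧ ∀ ls ∈ L, proj ls.1 p ≠ ls.2 := by
  have habs : |t| < 1 := abs_lt.2 ⟨ht.1, ht.2⟩
  set bad : Set ℝ :=
    (fun ls : ℝ × ℝ => (ls.2 - t * Real.cos (α - ls.1)) / Real.sin (ls.1 - α)) '' L with hbaddef
  have hbad : #↥bad < 𝔠 := mk_image_le.trans_lt hL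
  have hIoo : 𝔠 ≤ #↥(Ioo (0 : ℝ) (1 - |t|)) := (mk_Ioo_real (by linarith)).ge
  obtain ⟨u, huI, hubad⟩ := exists_mem_not_mem hIoo hbad
  refine ⟨(t * Real.cos α - u * Real.sin α, t * Real.sin α + u * Real.cos α), ?_, ?_, ?_⟩
  · have h := Real.sin_sq_add_cos_sq α
    have h1 : (t * Real.cos α - u * Real.sin α) ^ 2 + (t * Real.sin α + u * Real.cos α) ^ 2
        = t ^ 2 + u ^ 2 := by nlinarith
    have h2 : t ^ 2 ≤ |t| * |t| := by rw [← sq_abs]; ring_nf; exact le_rfl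
    have h3 : u ^ 2 < (1 - |t|) * (1 - |t|) := by
      have := huI.1; have := huI.2; nlinarith
    have h4 : |t| ≥ 0 := abs_nonneg t
    simp only
    nlinarith
  · have h := proj_phi α α t u
    simpa using h
  · rintro ⟨β, s⟩ hls heq
    obtain ⟨hβ, hβα⟩ := hLmem _ hls
    by_cases hba : β = α
    · subst hba
      rw [proj_phi] at heq
      simp at heq
      exact hβα rfl heq.symm
    · have hD := sin_ne_zero_of_mem hα hβ hba
      apply hubad
      rw [hbaddef]
      refine ⟨(β, s), hls, ?_⟩
      rw [proj_phi] at heq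
      field_simp
      linarith

/-! ### Transfinite recursion machinery -/

/-- The index type for transfinite recursion: a well-order of type `ord 𝔠`. -/
abbrev Idx : Type := (Cardinal.continuum).ord.ToType

lemma exists_taskfun {T : Type} (hT : #T ≤ 𝔠) :
    ∃ f : Idx → Option T, ∀ τ : T, ∃ i, f i = some τ := by
  have h : #T ≤ #Idx := by rw [mk_ord_toType]; exact hT
  obtain ⟨e⟩ := Cardinal.le_def _ _ |>.mp h
  classical
  refine ⟨fun i => if h : ∃ τ, e τ = i then some h.choose else none, fun τ => ⟨e τ, ?_⟩⟩
  show (if h : ∃ τ', e τ' = e τ then some h.choose else none) = some τ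
  rw [dif_pos ⟨τ, rfl⟩]
  exact congrArg some (e.injective (Exists.choose_spec (⟨τ, rfl⟩ : ∃ τ', e τ' = e τ)))

/-! ### Construction of the Bernstein pair `F`, `G` in `[0, π)` -/

/-- `[0, π)` as a set. -/
def Yπ : Set ℝ := Ico 0 Real.pi

lemma Yπc : (closure Yπ \ Yπ).Countable := by
  have h : closure Yπ \ Yπ ⊆ {Real.pi} := by
    rw [Yπ, closure_Ico Real.pi_ne_zero.symm]
    rintro x ⟨hx1, hx2⟩
    have : ¬(0 ≤ x ∧ x < Real.pi) := hx2
    push_neg at this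
    exact le_antisymm hx1.2 (this hx1.1)
  exact (countable_singleton _).mono h

/-- Perfect subsets of the subspace `[0, π)`. -/
def PT1 : Type := {P : Set ↥Yπ // PerfectSet P}

lemma cardPT1 : #PT1 ≤ 𝔠 := card_perfects

/-- The task list for the Bernstein pair construction. -/
def task1 : Idx → Option PT1 := (exists_taskfun cardPT1).choose

lemma task1_surj : ∀ τ : PT1, ∃ i, task1 i = some τ := (exists_taskfun cardPT1).choose_spec

/-- The specification of one step of the Bernstein-pair recursion: at a stage with task `P`,
pick two distinct points of `P` different from all previously picked points. -/
def spec1 (i : Idx) (prev : ∀ j : Idx, j < i → Option (ℝ × ℝ)) (o : Option (ℝ × ℝ)) : Prop :=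
  (task1 i = none → o = none) ∧
  ∀ P : PT1, task1 i = some P → ∃ a b : ℝ, o = some (a, b) ∧
    a ∈ Subtype.val '' P.1 ∧ b ∈ Subtype.val '' P.1 ∧ a ≠ b ∧
    ∀ (j : Idx) (hj : j < i) (x y : ℝ), prev j hj = some (x, y) →
      a ≠ x ∧ a ≠ y ∧ b ≠ x ∧ b ≠ y

lemma spec1_exists (i : Idx) (prev : ∀ j : Idx, j < i → Option (ℝ × ℝ)) :
    ∃ o, spec1 i prev o := by
  cases h : task1 i with
  | none => exact ⟨none, fun _ => rfl, fun P hP => by rw [h] at hP; cases hP⟩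
  | some P =>
    set f : ↥(Iio i) × Bool → ℝ := fun jc =>
      match prev jc.1.1 jc.1.2 with
      | some (x, y) => if jc.2 then x else y
      | none => 0 with hf
    have hbadcard : #↥(range f) < 𝔠 := by
      refine mk_range_le.trans_lt ?_
      rw [mk_prod, lift_id, lift_id, mk_bool]
      exact mul_lt_of_lt aleph0_le_continuum (mk_Iio_ord_toType i)
        (by exact_mod_cast nat_lt_continuum 2)
    have hPcard : 𝔠 ≤ #↥(Subtype.val '' P.1) := card_perfect_image Yπc P.2.1 P.2.2
    obtain ⟨a, haP, habad⟩ := exists_mem_not_mem hPcard hbadcard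
    have hbad2 : #↥(insert a (range f)) < 𝔠 := by
      refine (mk_le_mk_of_subset (insert_subset_iff.mpr ⟨mem_union_left _ (mem_singleton a),
        subset_union_right⟩)).trans_lt ?_
      refine (mk_union_le _ _).trans_lt ?_
      exact add_lt_of_lt aleph0_le_continuum (mk_singleton a ▸ (by exact_mod_cast nat_lt_continuum 1)) hbadcard
    obtain ⟨b, hbP, hbbad⟩ := exists_mem_not_mem hPcard hbad2
    refine ⟨some (a, b), ?_, ?_⟩
    · intro h'; rw [h] at h'; cases h'
    intro P' hP'
    rw [h] at hP'
    obtain rfl : P = P' := by cases hP'; rfl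
    refine ⟨a, b, rfl, haP, hbP, ?_, ?_⟩
    · rintro rfl
      exact hbbad (mem_insert _ _)
    · intro j hj x y heq
      have hx : x ∈ range f := ⟨(⟨j, hj⟩, true), by simp [hf, heq]⟩
      have hy : y ∈ range f := ⟨(⟨j, hj⟩, false), by simp [hf, heq]⟩
      exact ⟨fun h' => habad (h' ▸ hx), fun h' => habad (h' ▸ hy),
        fun h' => hbbad (mem_insert_of_mem _ (h' ▸ hx)),
        fun h' => hbbad (mem_insert_of_mem _ (h' ▸ hy))⟩

/-- The Bernstein-pair recursion. -/
def out1 : Idx → Option (ℝ × ℝ) :=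
  WellFoundedLT.fix (fun i prev => (spec1_exists i prev).choose)

lemma out1_spec (i : Idx) : spec1 i (fun j _ => out1 j) (out1 i) := by
  have h : out1 i = (spec1_exists i (fun j _ => out1 j)).choose := by
    rw [out1, WellFoundedLT.fix_eq]
  rw [h]
  exact (spec1_exists i _).choose_spec

/-- The first Bernstein set: first coordinates of the picked pairs. -/
def Fset : Set ℝ := {x | ∃ i b, out1 i = some (x, b)}

/-- The second Bernstein set: the complement in `[0, π)`. -/
def Gset : Set ℝ := Yπ \ Fset

lemma Fsub : Fset ⊆ Yπ := by
  rintro x ⟨i, b, hib⟩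
  obtain ⟨h1, h2⟩ := out1_spec i
  cases h : task1 i with
  | none => rw [h1 h] at hib; cases hib
  | some P =>
    obtain ⟨a, b', ho, haP, -, -, -⟩ := h2 P h
    rw [ho] at hib
    obtain ⟨y, -, hy⟩ := haP
    cases hib
    exact hy ▸ y.2

lemma key_ab {P : Set ↥Yπ} (hP : PerfectSet P) :
    ∃ a b : ℝ, a ∈ Subtype.val '' P ∧ b ∈ Subtype.val '' P ∧ a ∈ Fset ∧ b ∉ Fset := by
  obtain ⟨i, hi⟩ := task1_surj ⟨P, hP⟩
  obtain ⟨-, h2⟩ := out1_spec i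
  obtain ⟨a, b, ho, haP, hbP, hab, havoid⟩ := h2 _ hi
  refine ⟨a, b, haP, hbP, ⟨i, b, ho⟩, ?_⟩
  rintro ⟨i', b', hi'⟩
  rcases lt_trichotomy i' i with hlt | rfl | hlt
  · exact (havoid i' hlt b b' hi').2.2.1 rfl
  · rw [ho] at hi'
    cases hi'
    exact hab rfl
  · obtain ⟨h1'', h2''⟩ := out1_spec i'
    cases h' : task1 i' with
    | none => rw [h1'' h'] at hi'; cases hi'
    | some Q =>
      obtain ⟨a'', b'', ho'', -, -, -, havoid''⟩ := h2'' _ h'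
      rw [ho''] at hi'
      have hab'' : a'' = b := by cases hi'; rfl
      exact (havoid'' i hlt a b ho).2.1 hab''

lemma bernF : IsBernsteinIn Yπ Fset := by
  intro P hP
  obtain ⟨a, b, ⟨ya, hyaP, hya⟩, ⟨yb, hybP, hyb⟩, haF, hbF⟩ := key_ab hP
  constructor
  · exact ⟨ya, by rw [mem_setOf_eq, hya]; exact haF, hyaP⟩
  · exact ⟨yb, hybP, by rw [mem_setOf_eq, hyb]; exact hbF⟩

lemma bernG : IsBernsteinIn Yπ Gset := by
  intro P hP
  obtain ⟨a, b, ⟨ya, hyaP, hya⟩, ⟨yb, hybP, hyb⟩, haF, hbF⟩ := key_ab hP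
  constructor
  · exact ⟨yb, by rw [mem_setOf_eq, hyb]; exact ⟨hyb ▸ yb.2, hbF⟩, hybP⟩
  · exact ⟨ya, hyaP, by rw [mem_setOf_eq, hya]; exact fun hg => hg.2 haF⟩

/-! ### Construction of the set `A` -/

/-- `(-1, 1)` as a set. -/
def Y1 : Set ℝ := Ioo (-1 : ℝ) 1

lemma Y1c : (closure Y1 \ Y1).Countable := by
  have h : closure Y1 \ Y1 ⊆ {-1, 1} := by
    rw [Y1, closure_Ioo (by norm_num : (-1 : ℝ) ≠ 1)]
    rintro x ⟨hx1, hx2⟩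
    have h' : ¬(-1 < x ∧ x < 1) := hx2
    push_neg at h'
    rcases lt_or_ge (-1 : ℝ) x with h1 | h1
    · exact Or.inr (le_antisymm hx1.2 (h' h1))
    · exact Or.inl (le_antisymm h1 hx1.1)
  exact (Set.Countable.insert _ (countable_singleton _)).mono h

lemma GIco : Gset ⊆ Ico 0 Real.pi := fun x hx => hx.1

/-- Perfect subsets of the subspace `(-1, 1)`. -/
def PT2 : Type := {P : Set ↥Y1 // PerfectSet P}

/-- The tasks for the construction of `A`: either realize a value `t ∈ (-1,1)` of the
projection in a direction `α ∈ F`, or handle a perfect subset of `(-1,1)` for a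
direction in `G`. -/
def T2 : Type := (↥Fset × ↥Y1) ⊕ (↥Gset × PT2)

lemma cardT2 : #T2 ≤ 𝔠 := by
  have h1 : #(↥Fset × ↥Y1) ≤ 𝔠 := by
    rw [mk_prod, lift_id, lift_id]
    calc #↥Fset * #↥Y1 ≤ 𝔠 * 𝔠 :=
      mul_le_mul' ((mk_subtype_le _).trans_eq mk_real) ((mk_subtype_le _).trans_eq mk_real)
    _ = 𝔠 := continuum_mul_self
  have h2 : #(↥Gset × PT2) ≤ 𝔠 := by
    rw [mk_prod, lift_id, lift_id]
    calc #↥Gset * #PT2 ≤ 𝔠 * 𝔠 :=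
      mul_le_mul' ((mk_subtype_le _).trans_eq mk_real) card_perfects
    _ = 𝔠 := continuum_mul_self
  calc #T2 = #(↥Fset × ↥Y1) + #(↥Gset × PT2) := by rw [T2, mk_sum, lift_id, lift_id]
    _ ≤ 𝔠 + 𝔠 := add_le_add h1 h2
    _ = 𝔠 := continuum_add_self

def task2 : Idx → Option T2 := (exists_taskfun cardT2).choose

lemma task2_surj : ∀ τ : T2, ∃ i, task2 i = some τ := (exists_taskfun cardT2).choose_spec

/-- At each stage we record an optional output: a point of the plane added to `A`,
together with an optional "forbidden line" `(β, s)`. -/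
abbrev Out2 : Type := Option ((ℝ × ℝ) × Option (ℝ × ℝ))

/-- Points placed into `A` at stages before `i`. -/
def ptSet (i : Idx) (prev : ∀ j : Idx, j < i → Out2) : Set (ℝ × ℝ) :=
  {p | ∃ j hj r, prev j hj = some (p, r)}

/-- Forbidden lines recorded at stages before `i` (only well-formed ones with
direction in `Gset` count). -/
def lnSet (i : Idx) (prev : ∀ j : Idx, j < i → Out2) : Set (ℝ × ℝ) :=
  {ls | ls.1 ∈ Gset ∧ ∃ j hj p, prev j hj = some (p, some ls)}

lemma ptSet_card (i : Idx) (prev : ∀ j : Idx, j < i → Out2) : #↥(ptSet i prev) < 𝔠 := by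
  set f : ↥(Iio i) → ℝ × ℝ := fun j =>
    match prev j.1 j.2 with
    | some (p, _) => p
    | none => (0, 0) with hf
  have hsub : ptSet i prev ⊆ range f := by
    rintro p ⟨j, hj, r, heq⟩
    exact ⟨⟨j, hj⟩, by simp [hf, heq]⟩
  exact ((mk_le_mk_of_subset hsub).trans mk_range_le).trans_lt (mk_Iio_ord_toType i)

lemma lnSet_card (i : Idx) (prev : ∀ j : Idx, j < i → Out2) : #↥(lnSet i prev) < 𝔠 := by
  set f : ↥(Iio i) → ℝ × ℝ := fun j =>
    match prev j.1 j.2 with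
    | some (_, some ls) => ls
    | _ => (0, 0) with hf
  have hsub : lnSet i prev ⊆ range f := by
    rintro ls ⟨-, j, hj, p, heq⟩
    exact ⟨⟨j, hj⟩, by simp [hf, heq]⟩
  exact ((mk_le_mk_of_subset hsub).trans mk_range_le).trans_lt (mk_Iio_ord_toType i)

/-- The specification of one step of the recursion constructing `A`. -/
def spec2 (i : Idx) (prev : ∀ j : Idx, j < i → Out2) (o : Out2) : Prop :=
  (task2 i = none → o = none) ∧
  (∀ (α : ↥Fset) (t : ↥Y1), task2 i = some (Sum.inl (α, t)) →
    ∃ p : ℝ × ℝ, o = some (p, none) ∧ p.1 ^ 2 + p.2 ^ 2 < 1 ∧ proj (↑α) p = ↑t ∧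
      ∀ ls ∈ lnSet i prev, proj ls.1 p ≠ ls.2) ∧
  (∀ (g : ↥Gset) (P : PT2), task2 i = some (Sum.inr (g, P)) →
    ∃ (p : ℝ × ℝ) (t2 : ℝ), o = some (p, some (↑g, t2)) ∧ p.1 ^ 2 + p.2 ^ 2 < 1 ∧
      proj (↑g) p ∈ Subtype.val '' P.1 ∧
      (∀ ls ∈ lnSet i prev, proj ls.1 p ≠ ls.2) ∧ t2 ∈ Subtype.val '' P.1 ∧
      (∀ q ∈ ptSet i prev, proj (↑g) q ≠ t2) ∧ proj (↑g) p ≠ t2)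

lemma spec2_exists (i : Idx) (prev : ∀ j : Idx, j < i → Out2) : ∃ o, spec2 i prev o := by
  cases h : task2 i with
  | none =>
    refine ⟨none, fun _ => rfl, ?_, ?_⟩
    · intro α t heq; rw [h] at heq; cases heq
    · intro g P heq; rw [h] at heq; cases heq
  | some τ =>
    cases τ with
    | inl x =>
      obtain ⟨α, t⟩ := x
      obtain ⟨p, hdisc, hproj, havoid⟩ := seg_point (Fsub α.2) t.2 (lnSet_card i prev)
        (fun ls hls => ⟨GIco hls.1, fun heq1 => absurd α.2 (heq1 ▸ hls.1).2⟩)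
      refine ⟨some (p, none), ?_, ?_, ?_⟩
      · intro h'; rw [h] at h'; cases h'
      · intro α' t' heq
        rw [h] at heq
        have h2 : (Sum.inl (α, t) : T2) = Sum.inl (α', t') := by cases heq; rfl
        obtain ⟨rfl, rfl⟩ : α = α' ∧ t = t' := by cases h2; exact ⟨rfl, rfl⟩
        exact ⟨p, rfl, hdisc, hproj, havoid⟩
      · intro g P heq; rw [h] at heq; cases heq
    | inr x =>
      obtain ⟨g, P⟩ := x
      have hPcard : 𝔠 ≤ #↥(Subtype.val '' P.1) := card_perfect_image Y1c P.2.1 P.2.2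
      have hbad1 : #↥{s : ℝ | ((g : ℝ), s) ∈ lnSet i prev} < 𝔠 := by
        have hsub : {s : ℝ | ((g : ℝ), s) ∈ lnSet i prev} ⊆
            range (fun ls : ↥(lnSet i prev) => (ls : ℝ × ℝ).2) :=
          fun s hs => ⟨⟨_, hs⟩, rfl⟩
        exact ((mk_le_mk_of_subset hsub).trans mk_range_le).trans_lt (lnSet_card i prev)
      obtain ⟨t1, ht1P, ht1bad⟩ := exists_mem_not_mem hPcard hbad1
      have ht1Y : t1 ∈ Y1 := by obtain ⟨y, -, rfl⟩ := ht1P; exact y.2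
      obtain ⟨p, hdisc, hproj, havoid⟩ := seg_point (GIco g.2) ht1Y (lnSet_card i prev)
        (fun ls hls => ⟨GIco hls.1, fun heq1 hst => ht1bad (by
          have h3 : ((g : ℝ), t1) = ls := by rw [← heq1, ← hst]
          show ((g : ℝ), t1) ∈ lnSet i prev
          rw [h3]; exact hls)⟩)
      have hbad2 : #↥(proj (↑g) '' insert p (ptSet i prev)) < 𝔠 := by
        refine mk_image_le.trans_lt ?_
        refine (mk_le_mk_of_subset (insert_subset_iff.mpr ⟨mem_union_left _ (mem_singleton p),
          subset_union_right⟩)).trans_lt ?_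
        refine (mk_union_le _ _).trans_lt ?_
        exact add_lt_of_lt aleph0_le_continuum
          (mk_singleton p ▸ (by exact_mod_cast nat_lt_continuum 1)) (ptSet_card i prev)
      obtain ⟨t2, ht2P, ht2bad⟩ := exists_mem_not_mem hPcard hbad2
      refine ⟨some (p, some ((g : ℝ), t2)), ?_, ?_, ?_⟩
      · intro h'; rw [h] at h'; cases h'
      · intro α' t' heq; rw [h] at heq; cases heq
      · intro g' P' heq
        rw [h] at heq
        have h2 : (Sum.inr (g, P) : T2) = Sum.inr (g', P') := by cases heq; rfl
        obtain ⟨rfl, rfl⟩ : g = g' ∧ P = P' := by cases h2; exact ⟨rfl, rfl⟩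
        exact ⟨p, t2, rfl, hdisc, hproj ▸ ht1P, havoid, ht2P,
          fun q hq he => ht2bad ⟨q, mem_insert_of_mem _ hq, he⟩,
          fun he => ht2bad ⟨p, mem_insert _ _, he⟩⟩

/-- The recursion constructing `A`. -/
def out2 : Idx → Out2 :=
  WellFoundedLT.fix (fun i prev => (spec2_exists i prev).choose)

lemma out2_spec (i : Idx) : spec2 i (fun j _ => out2 j) (out2 i) := by
  have h : out2 i = (spec2_exists i (fun j _ => out2 j)).choose := by
    rw [out2, WellFoundedLT.fix_eq]
  rw [h]
  exact (spec2_exists i _).choose_spec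

/-- The constructed set `A`. -/
def Aset : Set (ℝ × ℝ) := {p | ∃ i r, out2 i = some (p, r)}

lemma hAdisc : Aset ⊆ {p : ℝ × ℝ | p.1 ^ 2 + p.2 ^ 2 < 1} := by
  rintro p ⟨i, r, hi⟩
  obtain ⟨h0, h1, h2⟩ := out2_spec i
  cases h : task2 i with
  | none => rw [h0 h] at hi; cases hi
  | some τ =>
    cases τ with
    | inl x =>
      obtain ⟨α, t⟩ := x
      obtain ⟨p', ho, hdisc, -⟩ := h1 α t h
      rw [ho] at hi
      cases hi
      exact hdisc
    | inr x =>
      obtain ⟨g, P⟩ := x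
      obtain ⟨p', t2, ho, hdisc, -⟩ := h2 g P h
      rw [ho] at hi
      cases hi
      exact hdisc

lemma hFproj : ∀ α ∈ Fset, proj α '' Aset = Ioo (-1 : ℝ) 1 := by
  intro α hα
  apply subset_antisymm
  · rintro _ ⟨p, hpA, rfl⟩
    exact proj_mem_Ioo (hAdisc hpA)
  · intro t ht
    obtain ⟨i, hi⟩ := task2_surj (Sum.inl (⟨α, hα⟩, ⟨t, ht⟩))
    obtain ⟨-, h1, -⟩ := out2_spec i
    obtain ⟨p, ho, -, hproj, -⟩ := h1 _ _ hi
    exact ⟨p, ⟨i, _, ho⟩, hproj⟩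

lemma Aavoid {α t2 : ℝ} {i : Idx} {p : ℝ × ℝ} (hα : α ∈ Gset)
    (hout : out2 i = some (p, some (α, t2))) (hpt2 : proj α p ≠ t2)
    (hprev : ∀ q ∈ ptSet i (fun j _ => out2 j), proj α q ≠ t2) :
    ∀ q ∈ Aset, proj α q ≠ t2 := by
  rintro q ⟨i', r', hi'⟩
  rcases lt_trichotomy i' i with hlt | rfl | hlt
  · exact hprev q ⟨i', hlt, r', hi'⟩
  · rw [hout] at hi'
    cases hi'
    exact hpt2
  · have hls : (α, t2) ∈ lnSet i' (fun j _ => out2 j) := ⟨hα, i, hlt, p, hout⟩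
    obtain ⟨h0, h1, h2⟩ := out2_spec i'
    cases h : task2 i' with
    | none => rw [h0 h] at hi'; cases hi'
    | some τ =>
      cases τ with
      | inl x =>
        obtain ⟨α', t'⟩ := x
        obtain ⟨p', ho', -, -, havoid'⟩ := h1 α' t' h
        rw [ho'] at hi'
        cases hi'
        exact havoid' (α, t2) hls
      | inr x =>
        obtain ⟨g', P'⟩ := x
        obtain ⟨p', t2', ho', -, -, havoid', -⟩ := h2 g' P' h
        rw [ho'] at hi'
        cases hi'
        exact havoid' (α, t2) hls

lemma hGproj : ∀ α ∈ Gset, IsBernsteinIn Y1 (proj α '' Aset) := by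
  intro α hα P hP
  obtain ⟨i, hi⟩ := task2_surj (Sum.inr (⟨α, hα⟩, ⟨P, hP⟩))
  obtain ⟨-, -, h2⟩ := out2_spec i
  obtain ⟨p, t2, ho, hdisc, hprojP, havoid, ht2P, hprev, hpt2⟩ := h2 ⟨α, hα⟩ ⟨P, hP⟩ hi
  constructor
  · obtain ⟨y, hyP, hyv⟩ := hprojP
    refine ⟨y, ?_, hyP⟩
    rw [mem_setOf_eq, hyv]
    exact ⟨p, ⟨i, _, ho⟩, rfl⟩
  · obtain ⟨y2, hy2P, hy2v⟩ := ht2P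
    refine ⟨y2, hy2P, ?_⟩
    rw [mem_setOf_eq, hy2v]
    rintro ⟨q, hqA, hqproj⟩
    exact Aavoid hα ho hpt2 hprev q hqA hqproj

end

end Stmt12Aux

theorem stmt12 :
    ∃ (A : Set (ℝ × ℝ)) (F G : Set ℝ),
      A ⊆ {p : ℝ × ℝ | p.1 ^ 2 + p.2 ^ 2 < 1} ∧
      Disjoint F G ∧ F ∪ G = Set.Ico 0 Real.pi ∧
      IsBernsteinIn (Set.Ico 0 Real.pi) F ∧ IsBernsteinIn (Set.Ico 0 Real.pi) G ∧
      (∀ α ∈ F, proj α '' A = Set.Ioo (-1 : ℝ) 1) ∧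
      (∀ α ∈ G, IsBernsteinIn (Set.Ioo (-1 : ℝ) 1) (proj α '' A)) := by
  refine ⟨Stmt12Aux.Aset, Stmt12Aux.Fset, Stmt12Aux.Gset, Stmt12Aux.hAdisc, ?_, ?_,
    Stmt12Aux.bernF, Stmt12Aux.bernG, Stmt12Aux.hFproj, Stmt12Aux.hGproj⟩
  · exact show Disjoint Stmt12Aux.Fset (Stmt12Aux.Yπ \ Stmt12Aux.Fset) from disjoint_sdiff_right
  · exact show Stmt12Aux.Fset ∪ (Stmt12Aux.Yπ \ Stmt12Aux.Fset) = Stmt12Aux.Yπ from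
      Set.union_diff_cancel Stmt12Aux.Fsub
end

section
/- Let n ≥ 2 be an integer and let A be a Lusin set contained in the closed unit ball B(0,1) of the Euclidean space ℝⁿ. Then for every (n-1)-dimensional linear subspace K of ℝⁿ with orthogonal projection π : ℝⁿ → K, the image π[A] is a Lusin set in π[B(0,1)] (the closed unit ball of K): that is, π[A] is uncountable and meets every meager subset of π[B(0,1)] (with its subspace topology) in a countable set. -/
open Set Topology

lemma nwd_mono {X : Type*} [TopologicalSpace X] {s t : Set X} (h : s ⊆ t)
    (ht : IsNowhereDense t) : IsNowhereDense s := by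
  have := interior_mono (closure_mono h)
  rw [ht] at this
  exact eq_empty_iff_forall_notMem.2 fun x hx => (this hx).elim

/-- Preimage of a nowhere dense set under a continuous open map is nowhere dense. -/
lemma nwd_preimage {X Y : Type*} [TopologicalSpace X] [TopologicalSpace Y]
    {f : X → Y} (hc : Continuous f) (ho : IsOpenMap f) {s : Set Y}
    (hs : IsNowhereDense s) : IsNowhereDense (f ⁻¹' s) := by
  apply nwd_mono (preimage_mono subset_closure : f ⁻¹' s ⊆ f ⁻¹' closure s)
  rw [(isClosed_closure.preimage hc).isNowhereDense_iff]
  rw [eq_empty_iff_forall_notMem]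
  intro x hx
  have h1 : IsOpen (f '' interior (f ⁻¹' closure s)) := ho _ isOpen_interior
  have h2 : f '' interior (f ⁻¹' closure s) ⊆ closure s :=
    (image_mono (f := f) interior_subset).trans (image_preimage_subset f _)
  have h3 : f x ∈ interior (closure s) :=
    interior_maximal h2 h1 (mem_image_of_mem f hx)
  rw [hs] at h3; exact h3

lemma meagre_preimage {X Y : Type*} [TopologicalSpace X] [TopologicalSpace Y]
    {f : X → Y} (hc : Continuous f) (ho : IsOpenMap f) {s : Set Y}
    (hs : IsMeagre s) : IsMeagre (f ⁻¹' s) := by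
  rw [isMeagre_iff_countable_union_isNowhereDense] at hs ⊢
  obtain ⟨S, hnwd, hcnt, hsub⟩ := hs
  refine ⟨(fun t => f ⁻¹' t) '' S, ?_, hcnt.image _, ?_⟩
  · rintro t ⟨u, hu, rfl⟩; exact nwd_preimage hc ho (hnwd u hu)
  · intro x hx
    obtain ⟨t, ht, hxt⟩ := hsub hx
    exact ⟨f ⁻¹' t, ⟨t, ht, rfl⟩, hxt⟩

/-- Image under `Subtype.val` of a nowhere dense subset of a closed subspace is nowhere dense. -/
lemma nwd_val_image {X : Type*} [TopologicalSpace X] {Y : Set X} (hY : IsClosed Y)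
    {M : Set ↥Y} (hM : IsNowhereDense M) : IsNowhereDense (Subtype.val '' M) := by
  rw [IsNowhereDense, eq_empty_iff_forall_notMem]
  intro x hx
  have hcl : closure (Subtype.val '' M) ⊆ Y :=
    hY.closure_subset_iff.2 (by rintro _ ⟨m, _, rfl⟩; exact m.2)
  have hxY : x ∈ Y := hcl (interior_subset hx)
  -- pull back to the subspace
  have hopen : IsOpen (Subtype.val ⁻¹' interior (closure (Subtype.val '' M)) : Set ↥Y) :=
    isOpen_interior.preimage continuous_subtype_val
  have hsub : (Subtype.val ⁻¹' interior (closure (Subtype.val '' M)) : Set ↥Y) ⊆ closure M := by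
    intro z hz
    rw [IsEmbedding.subtypeVal.closure_eq_preimage_closure_image]
    exact mem_preimage.2 (interior_subset (mem_preimage.1 hz))
  have : (⟨x, hxY⟩ : ↥Y) ∈ interior (closure M) :=
    interior_maximal hsub hopen hx
  rw [hM] at this; exact this

lemma meagre_val_image {X : Type*} [TopologicalSpace X] {Y : Set X} (hY : IsClosed Y)
    {M : Set ↥Y} (hM : IsMeagre M) : IsMeagre (Subtype.val '' M) := by
  rw [isMeagre_iff_countable_union_isNowhereDense] at hM ⊢
  obtain ⟨S, hnwd, hcnt, hsub⟩ := hM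
  refine ⟨(fun t => Subtype.val '' t) '' S, ?_, hcnt.image _, ?_⟩
  · rintro t ⟨u, hu, rfl⟩; exact nwd_val_image hY (hnwd u hu)
  · rintro _ ⟨m, hm, rfl⟩
    obtain ⟨t, ht, hmt⟩ := hsub hm
    exact ⟨Subtype.val '' t, ⟨t, ht, rfl⟩, mem_image_of_mem _ hmt⟩

lemma nwd_isMeagre {X : Type*} [TopologicalSpace X] {s : Set X}
    (hs : IsNowhereDense s) : IsMeagre s :=
  isMeagre_iff_countable_union_isNowhereDense.2
    ⟨{s}, by simpa using hs, countable_singleton s, by simp⟩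


/-- `L` is a Lusin set in a topological space: `L` is uncountable and meets
every meager set in a countable set. -/
def LusinSet {Z : Type*} [TopologicalSpace Z] (L : Set Z) : Prop :=
  ¬L.Countable ∧ ∀ M : Set Z, IsMeagre M → (L ∩ M).Countable

/-- `L` is a Lusin set in the subspace `Y` (with the subspace topology): `L` is
uncountable and meets every meager subset of `Y` in a countable set. -/
def LusinSetIn {Z : Type*} [TopologicalSpace Z] (Y L : Set Z) : Prop :=
  ¬L.Countable ∧ ∀ M : Set ↥Y, IsMeagre M → (L ∩ Subtype.val '' M).Countable

theorem stmt13 (n : ℕ) (hn : 2 ≤ n)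
    (A : Set (EuclideanSpace ℝ (Fin n)))
    (hAsub : A ⊆ Metric.closedBall 0 1)
    (hALusin : LusinSet A)
    (K : Submodule ℝ (EuclideanSpace ℝ (Fin n)))
    (hK : Module.finrank ℝ K = n - 1) :
    LusinSetIn (⇑(K.orthogonalProjectionOnto) '' Metric.closedBall 0 1)
      (⇑(K.orthogonalProjectionOnto) '' A) := by
  set π := K.orthogonalProjectionOnto with hπ
  have hsurj : Function.Surjective ⇑π := fun y =>
    ⟨(y : EuclideanSpace ℝ (Fin n)), Submodule.orthogonalProjectionOnto_mem_subspace_eq_self (K := K) y⟩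
  have ho : IsOpenMap ⇑π := ContinuousLinearMap.isOpenMap π hsurj
  have hcont : Continuous ⇑π := π.continuous
  have hKnt : Nontrivial ↥K := by
    have : 0 < Module.finrank ℝ K := by omega
    exact Module.nontrivial_of_finrank_pos this
  -- every fiber is meager
  have hfiber : ∀ y : ↥K, IsMeagre (⇑π ⁻¹' {y}) := by
    intro y
    refine meagre_preimage hcont ho (nwd_isMeagre ?_)
    rw [isClosed_singleton.isNowhereDense_iff]
    exact interior_singleton y
  constructor
  · intro hcnt
    apply hALusin.1
    have hsubU : A ⊆ ⋃ y ∈ ⇑π '' A, (A ∩ ⇑π ⁻¹' {y}) := by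
      intro x hx
      exact Set.mem_biUnion (Set.mem_image_of_mem _ hx) ⟨hx, rfl⟩
    exact Set.Countable.mono hsubU
      (hcnt.biUnion fun y _ => hALusin.2 _ (hfiber y))
  · intro M hM
    have hYcl : IsClosed (⇑π '' Metric.closedBall 0 1) :=
      ((isCompact_closedBall (0 : EuclideanSpace ℝ (Fin n)) 1).image hcont).isClosed
    have hS : IsMeagre (Subtype.val '' M : Set ↥K) := meagre_val_image hYcl hM
    have hpre : IsMeagre (⇑π ⁻¹' (Subtype.val '' M)) := meagre_preimage hcont ho hS
    have hcnt := hALusin.2 _ hpre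
    refine Set.Countable.mono ?_ (hcnt.image ⇑π)
    rintro z ⟨⟨a, ha, rfl⟩, hz⟩
    exact ⟨a, ⟨ha, hz⟩, rfl⟩
end
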